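/- arXiv:1510.08248 — 2 statements merged into one kernel-verified Lean document; each statement's English description precedes it below -/
import Mathlib

section
/- Let N ∈ ℕ, let τ_1 < τ_2 < … < τ_N be real numbers, and for m = 1,…,N let a_0^{(m)} ∈ ℝ, a_1^{(m)} > 0, and F_m = [a_0^{(m)} − 2a_1^{(m)}, a_0^{(m)} + 2a_1^{(m)}]. Let f : {1,…,N} × ℝ → ℝ be such that x ↦ f(m,x) is continuously differentiable for each m, and set f̂_k^{(m)} = (1/π) ∫_0^π f(m, a_0^{(m)} + 2a_1^{(m)} cos θ) cos(kθ) dθ for k ≥ 1. Then the double series σ(f)² = Σ_{k=1}^∞ Σ_{m1,m2=1}^N k e^{−|τ_{m1}−τ_{m2}| k} f̂_k^{(m1)} f̂_k^{(m2)} converges absolutely, is nonnegative, and there exists a constant C, depending only on max_m a_1^{(m)}, such that σ(f)² ≤ C N Σ_{m=1}^N sup_{x ∈ F_m} |∂f/∂x(m,x)|². -/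
open MeasureTheory Filter Topology

open Real intervalIntegral

noncomputable section

/-- `f̂_k = (1/π) ∫_0^π f(a₀ + 2a₁ cos θ) cos(kθ) dθ`. -/
def cosCoeff (f : ℝ → ℝ) (a0 a1 : ℝ) (k : ℕ) : ℝ :=
  (1 / Real.pi) * ∫ θ in (0:ℝ)..Real.pi, f (a0 + 2 * a1 * Real.cos θ) * Real.cos (k * θ)


lemma cont_cos_c (c : ℝ) : Continuous (fun θ : ℝ => Real.cos (c*θ)) := by fun_prop

lemma integral_cos_c {c : ℝ} (hc : c ≠ 0) : ∫ θ in (0:ℝ)..π, Real.cos (c*θ) = Real.sin (c*π) / c := by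
  rw [intervalIntegral.integral_comp_mul_left (fun x => Real.cos x) hc]
  simp [integral_cos, div_eq_inv_mul]

lemma sin_orth {m n : ℕ} (hmn : m ≠ n) :
    ∫ θ in (0:ℝ)..π, Real.sin (m*θ) * Real.sin (n*θ) = 0 := by
  have key : ∀ θ : ℝ, Real.sin (m*θ) * Real.sin (n*θ)
      = (Real.cos ((((m:ℝ)-(n:ℝ)))*θ) - Real.cos (((m:ℝ)+(n:ℝ))*θ)) / 2 := by
    intro θ
    rw [sub_mul, add_mul, Real.cos_sub, Real.cos_add]
    ring
  simp_rw [key]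
  rw [intervalIntegral.integral_div, intervalIntegral.integral_sub
    ((cont_cos_c _).intervalIntegrable _ _) ((cont_cos_c _).intervalIntegrable _ _)]
  have h1 : ((m:ℝ) - n) ≠ 0 := sub_ne_zero.2 (by exact_mod_cast hmn)
  have hmn0 : m + n ≠ 0 := by omega
  have h2 : ((m:ℝ) + n) ≠ 0 := by exact_mod_cast (Nat.cast_ne_zero (R := ℝ)).2 hmn0
  rw [integral_cos_c h1, integral_cos_c h2]
  have e1 : Real.sin (((m:ℝ)-n)*π) = 0 := by
    have := Real.sin_int_mul_pi ((m:ℤ) - n); push_cast at this ⊢; linarith [this]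
  have e2 : Real.sin (((m:ℝ)+n)*π) = 0 := by
    have := Real.sin_int_mul_pi ((m:ℤ) + n); push_cast at this ⊢; linarith [this]
  rw [e1, e2]; simp

lemma sin_sq_int (k : ℕ) (hk : 0 < k) :
    ∫ θ in (0:ℝ)..π, Real.sin (k*θ) * Real.sin (k*θ) = π / 2 := by
  have key : ∀ θ : ℝ, Real.sin (k*θ) * Real.sin (k*θ)
      = (1 - Real.cos ((2*(k:ℝ))*θ)) / 2 := by
    intro θ
    have h2 : Real.cos ((2*(k:ℝ))*θ) = 1 - 2 * Real.sin ((k:ℝ)*θ)^2 := by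
      rw [show (2*(k:ℝ))*θ = 2*((k:ℝ)*θ) by ring, Real.cos_two_mul', Real.sin_sq]
      ring
    rw [h2]; ring
  simp_rw [key]
  rw [intervalIntegral.integral_div, intervalIntegral.integral_sub
    (intervalIntegrable_const) ((cont_cos_c _).intervalIntegrable _ _)]
  have h1 : (2*(k:ℝ)) ≠ 0 := by positivity
  rw [integral_cos_c h1]
  have e1 : Real.sin ((2*(k:ℝ))*π) = 0 := by
    have := Real.sin_int_mul_pi (2*(k:ℤ)); push_cast at this ⊢; linarith [this]
  rw [e1]; simp


lemma sin_orth' {m n : ℕ} :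
    ∫ θ in (0:ℝ)..π, Real.sin ((m+1)*θ) * Real.sin ((n+1)*θ) = if m = n then π/2 else 0 := by
  split_ifs with h
  · subst h
    have := sin_sq_int (m+1) (Nat.succ_pos m)
    push_cast at this ⊢; exact this
  · have : (m+1 : ℕ) ≠ (n+1 : ℕ) := by omega
    have := sin_orth this
    push_cast at this ⊢; exact this

lemma bessel (h : ℝ → ℝ) (hc : Continuous h) (K : ℕ) :
    ∑ k ∈ Finset.range K, (∫ θ in (0:ℝ)..π, h θ * Real.sin ((k+1)*θ))^2
      ≤ (π/2) * ∫ θ in (0:ℝ)..π, (h θ)^2 := by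
  set s : ℕ → ℝ := fun k => ∫ θ in (0:ℝ)..π, h θ * Real.sin ((k+1)*θ) with hs
  set c : ℕ → ℝ := fun k => (2/π) * s k with hcdef
  set g : ℝ → ℝ := fun θ => ∑ k ∈ Finset.range K, c k * Real.sin ((k+1)*θ) with hg
  have hgc : Continuous g := by
    apply continuous_finset_sum
    intro k _
    fun_prop
  have hπ : (0:ℝ) < π := Real.pi_pos
  -- ∫ h*g
  have hA : ∫ θ in (0:ℝ)..π, h θ * g θ = ∑ k ∈ Finset.range K, c k * s k := by
    have : ∀ θ : ℝ, h θ * g θ = ∑ k ∈ Finset.range K, c k * (h θ * Real.sin ((k+1)*θ)) := by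
      intro θ; rw [hg]; simp only [Finset.mul_sum]; apply Finset.sum_congr rfl; intros; ring
    simp_rw [this]
    rw [intervalIntegral.integral_finset_sum]
    · apply Finset.sum_congr rfl; intro k _
      rw [intervalIntegral.integral_const_mul]
    · intro k _
      apply Continuous.intervalIntegrable; fun_prop
  -- ∫ g²
  have hB : ∫ θ in (0:ℝ)..π, (g θ)^2 = ∑ k ∈ Finset.range K, (c k)^2 * (π/2) := by
    have expand : ∀ θ : ℝ, (g θ)^2 = ∑ k ∈ Finset.range K, ∑ l ∈ Finset.range K,
        (c k * c l) * (Real.sin ((k+1)*θ) * Real.sin ((l+1)*θ)) := by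
      intro θ
      rw [hg, sq, Finset.sum_mul_sum]
      apply Finset.sum_congr rfl; intros; apply Finset.sum_congr rfl; intros; ring
    simp_rw [expand]
    rw [intervalIntegral.integral_finset_sum]
    · have : ∀ k ∈ Finset.range K,
          (∫ θ in (0:ℝ)..π, ∑ l ∈ Finset.range K,
            (c k * c l) * (Real.sin ((k+1)*θ) * Real.sin ((l+1)*θ))) = (c k)^2 * (π/2) := by
        intro k hk
        rw [intervalIntegral.integral_finset_sum]
        · have : ∀ l ∈ Finset.range K,
              (∫ θ in (0:ℝ)..π, (c k * c l) * (Real.sin ((k+1)*θ) * Real.sin ((l+1)*θ)))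
                = if k = l then (c k)^2 * (π/2) else 0 := by
            intro l _
            rw [intervalIntegral.integral_const_mul, sin_orth']
            split_ifs with hkl
            · subst hkl; ring
            · simp
          rw [Finset.sum_congr rfl this, Finset.sum_ite_eq, if_pos hk]
        · intro l _; apply Continuous.intervalIntegrable; fun_prop
      exact Finset.sum_congr rfl this
    · intro k _
      apply Continuous.intervalIntegrable
      apply continuous_finset_sum; intro l _; fun_prop
  -- expansion of the nonnegative integral
  have hnonneg : (0:ℝ) ≤ ∫ θ in (0:ℝ)..π, (h θ - g θ)^2 :=
    intervalIntegral.integral_nonneg (le_of_lt hπ) (fun θ _ => sq_nonneg _)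
  have hexp : ∫ θ in (0:ℝ)..π, (h θ - g θ)^2
      = (∫ θ in (0:ℝ)..π, (h θ)^2) - 2*(∫ θ in (0:ℝ)..π, h θ * g θ)
        + ∫ θ in (0:ℝ)..π, (g θ)^2 := by
    have e : ∀ θ : ℝ, (h θ - g θ)^2 = ((h θ)^2 - 2*(h θ * g θ)) + (g θ)^2 := fun θ => by ring
    simp_rw [e]
    rw [intervalIntegral.integral_add, intervalIntegral.integral_sub,
      intervalIntegral.integral_const_mul]
    · exact (hc.pow 2).intervalIntegrable _ _
    · exact (continuous_const.mul (hc.mul hgc)).intervalIntegrable _ _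
    · exact ((hc.pow 2).sub (continuous_const.mul (hc.mul hgc))).intervalIntegrable _ _
    · exact (hgc.pow 2).intervalIntegrable _ _
  set S : ℝ := ∑ k ∈ Finset.range K, (s k)^2 with hS
  have hcs : ∑ k ∈ Finset.range K, c k * s k = (2/π) * S := by
    rw [hS, Finset.mul_sum]; apply Finset.sum_congr rfl; intros; rw [hcdef]; ring
  have hcc : ∑ k ∈ Finset.range K, (c k)^2 * (π/2) = (2/π) * S := by
    rw [hS, Finset.mul_sum]; apply Finset.sum_congr rfl; intros
    rw [hcdef]; field_simp
  rw [hexp, hA, hB, hcs, hcc] at hnonneg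
  have : (2/π) * S ≤ ∫ θ in (0:ℝ)..π, (h θ)^2 := by linarith
  calc S = (π/2) * ((2/π) * S) := by field_simp
  _ ≤ (π/2) * ∫ θ in (0:ℝ)..π, (h θ)^2 := by
      apply mul_le_mul_of_nonneg_left this (by positivity)




section
variable (f : ℝ → ℝ) (a0 a1 : ℝ)

lemma ibp (hf : ContDiff ℝ 1 f) (k : ℕ) :
    ((k+1:ℕ):ℝ) * cosCoeff f a0 a1 (k+1)
      = -(1/π) * ∫ θ in (0:ℝ)..π,
          (deriv f (a0 + 2*a1*Real.cos θ) * (2*a1*(-Real.sin θ))) * Real.sin (((k:ℝ)+1)*θ) := by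
  have hk : ((k:ℝ)+1) ≠ 0 := by positivity
  have hu : ∀ θ ∈ Set.uIcc (0:ℝ) π, HasDerivAt (fun θ => f (a0 + 2*a1*Real.cos θ))
      (deriv f (a0 + 2*a1*Real.cos θ) * (2*a1*(-Real.sin θ))) θ := by
    intro θ _
    have h1 : HasDerivAt (fun θ : ℝ => a0 + 2*a1*Real.cos θ) (2*a1*(-Real.sin θ)) θ :=
      ((Real.hasDerivAt_cos θ).const_mul (2*a1)).const_add a0
    have h2 : HasDerivAt f (deriv f (a0 + 2*a1*Real.cos θ)) (a0 + 2*a1*Real.cos θ) :=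
      ((hf.differentiable one_ne_zero) _).hasDerivAt
    exact h2.comp θ h1
  have hv : ∀ θ ∈ Set.uIcc (0:ℝ) π, HasDerivAt (fun θ : ℝ => Real.sin (((k:ℝ)+1)*θ)/((k:ℝ)+1))
      (Real.cos (((k:ℝ)+1)*θ)) θ := by
    intro θ _
    have h1 : HasDerivAt (fun θ : ℝ => ((k:ℝ)+1)*θ) ((k:ℝ)+1) θ := by
      simpa using (hasDerivAt_id θ).const_mul ((k:ℝ)+1)
    have h2 := (Real.hasDerivAt_sin (((k:ℝ)+1)*θ)).comp θ h1
    have h3 := h2.div_const ((k:ℝ)+1)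
    simpa [mul_comm, mul_div_assoc, mul_div_cancel_left₀ _ hk] using h3
  have hderivc : Continuous (deriv f) := hf.continuous_deriv le_rfl
  have hu' : IntervalIntegrable (fun θ => deriv f (a0 + 2*a1*Real.cos θ) * (2*a1*(-Real.sin θ)))
      volume 0 π := by
    apply Continuous.intervalIntegrable
    exact (hderivc.comp (by fun_prop)).mul (by fun_prop)
  have hv' : IntervalIntegrable (fun θ => Real.cos (((k:ℝ)+1)*θ)) volume 0 π :=
    (by fun_prop : Continuous fun θ : ℝ => Real.cos (((k:ℝ)+1)*θ)).intervalIntegrable _ _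
  have := intervalIntegral.integral_mul_deriv_eq_deriv_mul hu hv hu' hv'
  have hsin0 : Real.sin (((k:ℝ)+1)*π) = 0 := by
    have := Real.sin_int_mul_pi ((k:ℤ)+1); push_cast at this ⊢; linarith [this]
  rw [hsin0] at this
  simp only [mul_zero, Real.sin_zero, zero_div, zero_mul, zero_sub, sub_zero, mul_zero] at this
  unfold cosCoeff
  have hcast : ∀ θ : ℝ, Real.cos (((k+1:ℕ):ℝ) * θ) = Real.cos (((k:ℝ)+1)*θ) := by
    intro θ; norm_num
  simp_rw [hcast]
  rw [this]
  have e : ∀ x : ℝ, deriv f (a0 + 2 * a1 * Real.cos x) * (2 * a1 * -Real.sin x) *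
      (Real.sin ((↑k + 1) * x) / (↑k + 1))
      = (deriv f (a0 + 2 * a1 * Real.cos x) * (2 * a1 * -Real.sin x) *
        Real.sin ((↑k + 1) * x)) * ((k:ℝ)+1)⁻¹ := by
    intro x; field_simp
  simp_rw [e]
  rw [intervalIntegral.integral_mul_const]
  push_cast
  field_simp

end




section
variable (f : ℝ → ℝ) (a0 a1 : ℝ)

lemma Dnonneg (hf : ContDiff ℝ 1 f) (ha1 : 0 < a1) :
    0 ≤ sSup ((fun x => |deriv f x|) '' Set.Icc (a0 - 2*a1) (a0 + 2*a1)) := by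
  have hmem : a0 ∈ Set.Icc (a0 - 2*a1) (a0 + 2*a1) := by
    constructor <;> nlinarith
  have hbdd : BddAbove ((fun x => |deriv f x|) '' Set.Icc (a0 - 2*a1) (a0 + 2*a1)) :=
    (isCompact_Icc.image_of_continuousOn
      (((hf.continuous_deriv le_rfl).abs).continuousOn)).bddAbove
  exact le_trans (abs_nonneg _) (le_csSup hbdd (Set.mem_image_of_mem _ hmem))

lemma deriv_le_D (hf : ContDiff ℝ 1 f) (ha1 : 0 < a1) (θ : ℝ) :
    |deriv f (a0 + 2*a1*Real.cos θ)|
      ≤ sSup ((fun x => |deriv f x|) '' Set.Icc (a0 - 2*a1) (a0 + 2*a1)) := by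
  have hbdd : BddAbove ((fun x => |deriv f x|) '' Set.Icc (a0 - 2*a1) (a0 + 2*a1)) :=
    (isCompact_Icc.image_of_continuousOn
      (((hf.continuous_deriv le_rfl).abs).continuousOn)).bddAbove
  apply le_csSup hbdd
  apply Set.mem_image_of_mem
  have h1 := Real.neg_one_le_cos θ; have h2 := Real.cos_le_one θ
  constructor <;> nlinarith

lemma coeff_sq_bound (hf : ContDiff ℝ 1 f) (ha1 : 0 < a1) :
    (Summable fun k : ℕ => (((k+1:ℕ):ℝ) * cosCoeff f a0 a1 (k+1))^2) ∧
    ∑' k : ℕ, (((k+1:ℕ):ℝ) * cosCoeff f a0 a1 (k+1))^2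
      ≤ 2 * a1^2 * (sSup ((fun x => |deriv f x|) '' Set.Icc (a0 - 2*a1) (a0 + 2*a1)))^2 := by
  set D := sSup ((fun x => |deriv f x|) '' Set.Icc (a0 - 2*a1) (a0 + 2*a1)) with hD
  set h : ℝ → ℝ := fun θ => deriv f (a0 + 2*a1*Real.cos θ) * (2*a1*(-Real.sin θ)) with hh
  have hhc : Continuous h := by
    apply Continuous.mul
    · exact (hf.continuous_deriv le_rfl).comp (by fun_prop)
    · fun_prop
  have hπ : (0:ℝ) < π := Real.pi_pos
  have hD0 : 0 ≤ D := Dnonneg f a0 a1 hf ha1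
  -- pointwise bound on h
  have hhb : ∀ θ : ℝ, (h θ)^2 ≤ (2*a1*D)^2 := by
    intro θ
    have h1 : |h θ| ≤ 2*a1*D := by
      rw [hh]
      have := deriv_le_D f a0 a1 hf ha1 θ
      have hs1 : |(-Real.sin θ)| ≤ 1 := by rw [abs_neg]; exact Real.abs_sin_le_one θ
      calc |deriv f (a0 + 2*a1*Real.cos θ) * (2*a1*(-Real.sin θ))|
          = |deriv f (a0 + 2*a1*Real.cos θ)| * (2*a1*|(-Real.sin θ)|) := by
            rw [abs_mul, abs_mul, abs_mul]; simp [abs_of_pos ha1, abs_of_nonneg, mul_assoc]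
        _ ≤ D * (2*a1*1) := by
            apply mul_le_mul this _ (by positivity) hD0
            have : 2*a1*|(-Real.sin θ)| ≤ 2*a1*1 := by nlinarith
            exact this
        _ = 2*a1*D := by ring
    calc (h θ)^2 = |h θ|^2 := (sq_abs _).symm
      _ ≤ (2*a1*D)^2 := by nlinarith [abs_nonneg (h θ)]
  have hint : ∫ θ in (0:ℝ)..π, (h θ)^2 ≤ π * (2*a1*D)^2 := by
    have := intervalIntegral.integral_mono_on (le_of_lt hπ)
      ((hhc.pow 2).intervalIntegrable 0 π) (_root_.intervalIntegrable_const (c := (2*a1*D)^2) (μ := volume))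
      (fun θ _ => hhb θ)
    simpa [mul_comm] using this
  -- partial sum bound
  have key : ∀ K : ℕ, ∑ k ∈ Finset.range K, (((k+1:ℕ):ℝ) * cosCoeff f a0 a1 (k+1))^2
      ≤ 2 * a1^2 * D^2 := by
    intro K
    have e : ∀ k : ℕ, (((k+1:ℕ):ℝ) * cosCoeff f a0 a1 (k+1))^2
        = (1/π)^2 * (∫ θ in (0:ℝ)..π, h θ * Real.sin (((k:ℝ)+1)*θ))^2 := by
      intro k
      rw [ibp f a0 a1 hf k]
      ring
    calc ∑ k ∈ Finset.range K, (((k+1:ℕ):ℝ) * cosCoeff f a0 a1 (k+1))^2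
        = (1/π)^2 * ∑ k ∈ Finset.range K, (∫ θ in (0:ℝ)..π, h θ * Real.sin (((k:ℝ)+1)*θ))^2 := by
          rw [Finset.mul_sum]; exact Finset.sum_congr rfl (fun k _ => e k)
      _ ≤ (1/π)^2 * ((π/2) * ∫ θ in (0:ℝ)..π, (h θ)^2) := by
          apply mul_le_mul_of_nonneg_left _ (by positivity)
          exact bessel h hhc K
      _ ≤ (1/π)^2 * ((π/2) * (π * (2*a1*D)^2)) := by
          apply mul_le_mul_of_nonneg_left _ (by positivity)
          apply mul_le_mul_of_nonneg_left hint (by positivity)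
      _ = 2 * a1^2 * D^2 := by field_simp
  have hsummable : Summable fun k : ℕ => (((k+1:ℕ):ℝ) * cosCoeff f a0 a1 (k+1))^2 :=
    summable_of_sum_range_le (fun k => sq_nonneg _) key
  exact ⟨hsummable, tsum_le_of_sum_range_le (fun k => sq_nonneg _) key⟩
end


lemma quad_update (E : ℕ → ℕ → ℝ) (hsym : ∀ i j, E i j = E j i) (n : ℕ) (hE : E n n = 1)
    (c : ℕ → ℝ) (δ : ℝ) :
    ∑ i ∈ Finset.range (n+1), ∑ j ∈ Finset.range (n+1),
        E i j * ((c i + if i = n then δ else 0) * (c j + if j = n then δ else 0))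
      = (∑ i ∈ Finset.range (n+1), ∑ j ∈ Finset.range (n+1), E i j * (c i * c j))
        + 2*δ*(∑ i ∈ Finset.range (n+1), E i n * c i) + δ^2 := by
  have expand : ∀ i j : ℕ, E i j * ((c i + if i = n then δ else 0) * (c j + if j = n then δ else 0))
      = E i j * (c i * c j) + (if j = n then E i j * c i * δ else 0)
        + (if i = n then E i j * δ * c j else 0)
        + (if i = n then (if j = n then E i j * δ^2 else 0) else 0) := by
    intro i j
    split_ifs <;> ring
  simp_rw [expand, Finset.sum_add_distrib]
  have hmem : n ∈ Finset.range (n+1) := Finset.self_mem_range_succ n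
  have T2 : ∑ i ∈ Finset.range (n+1), ∑ j ∈ Finset.range (n+1),
      (if j = n then E i j * c i * δ else 0) = δ * ∑ i ∈ Finset.range (n+1), E i n * c i := by
    rw [Finset.mul_sum]
    apply Finset.sum_congr rfl
    intro i _
    rw [Finset.sum_ite_eq' (Finset.range (n+1)) n (fun j => E i j * c i * δ), if_pos hmem]
    ring
  have T3 : ∑ i ∈ Finset.range (n+1), ∑ j ∈ Finset.range (n+1),
      (if i = n then E i j * δ * c j else 0) = δ * ∑ i ∈ Finset.range (n+1), E i n * c i := by
    have pull : ∀ i, ∑ j ∈ Finset.range (n+1), (if i = n then E i j * δ * c j else 0)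
        = if i = n then ∑ j ∈ Finset.range (n+1), E i j * δ * c j else 0 := by
      intro i; split_ifs <;> simp
    simp_rw [pull]
    rw [Finset.sum_ite_eq' (Finset.range (n+1)) n
      (fun i => ∑ j ∈ Finset.range (n+1), E i j * δ * c j), if_pos hmem]
    rw [Finset.mul_sum]
    apply Finset.sum_congr rfl
    intro j _
    rw [hsym n j]
    ring
  have T4 : ∑ i ∈ Finset.range (n+1), ∑ j ∈ Finset.range (n+1),
      (if i = n then (if j = n then E i j * δ^2 else 0) else 0) = δ^2 := by
    have pull : ∀ i, ∑ j ∈ Finset.range (n+1), (if i = n then (if j = n then E i j * δ^2 else 0) else 0)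
        = if i = n then (if True then E i n * δ^2 else 0) else 0 := by
      intro i
      split_ifs with h
      · rw [Finset.sum_ite_eq' (Finset.range (n+1)) n (fun j => E i j * δ^2), if_pos hmem]
      · simp
    simp_rw [pull]
    rw [Finset.sum_ite_eq' (Finset.range (n+1)) n _, if_pos hmem, if_pos trivial, hE]
    ring
  rw [T2, T3, T4]
  ring

lemma psd (K : ℝ) (hK : 0 ≤ K) :
    ∀ (N : ℕ) (τ : ℕ → ℝ), (∀ i j : ℕ, i ≤ j → j < N → τ i ≤ τ j) → ∀ c : ℕ → ℝ,
    0 ≤ ∑ i ∈ Finset.range N, ∑ j ∈ Finset.range N,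
        Real.exp (-|τ i - τ j| * K) * c i * c j := by
  intro N
  induction N with
  | zero => intro τ _ c; simp
  | succ n ih =>
    intro τ hmono c
    set E : ℕ → ℕ → ℝ := fun i j => Real.exp (-|τ i - τ j| * K) with hEdef
    have hsym : ∀ i j, E i j = E j i := by
      intro i j; rw [hEdef]; simp only; rw [abs_sub_comm]
    have hdiag : ∀ i, E i i = 1 := by
      intro i; rw [hEdef]; simp
    match n, ih, hmono with
    | 0, _, _ =>
      have : ∑ i ∈ Finset.range 1, ∑ j ∈ Finset.range 1, E i j * c i * c j
          = c 0 * c 0 := by simp [hdiag 0]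
      rw [this]; exact mul_self_nonneg _
    | (m+1), ih, hmono =>
      -- r = exp(-(τ (m+1) - τ m) K)
      set r : ℝ := Real.exp (-(τ (m+1) - τ m) * K) with hrdef
      have hτm : τ m ≤ τ (m+1) := hmono m (m+1) (by omega) (by omega)
      have hr0 : 0 < r := Real.exp_pos _
      have hr1 : r ≤ 1 := by
        rw [hrdef]
        apply Real.exp_le_one_iff.2
        nlinarith
      have hEr : ∀ i ∈ Finset.range (m+1), E i (m+1) = r * E i m := by
        intro i hi
        rw [Finset.mem_range] at hi
        have hτi : τ i ≤ τ m := hmono i m (by omega) (by omega)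
        rw [hEdef]; simp only
        rw [abs_of_nonpos (by linarith : τ i - τ (m+1) ≤ 0),
            abs_of_nonpos (by linarith : τ i - τ m ≤ 0), ← Real.exp_add]
        congr 1
        ring
      set δ : ℝ := r * c (m+1) with hδdef
      set c' : ℕ → ℝ := fun i => c i + if i = m then δ else 0 with hc'def
      -- split the (m+2)-sum
      have hsplit : ∑ i ∈ Finset.range (m+2), ∑ j ∈ Finset.range (m+2), E i j * c i * c j
          = (∑ i ∈ Finset.range (m+1), ∑ j ∈ Finset.range (m+1), E i j * c i * c j)
            + (∑ i ∈ Finset.range (m+1), E i (m+1) * c i * c (m+1))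
            + (∑ j ∈ Finset.range (m+1), E (m+1) j * c (m+1) * c j)
            + E (m+1) (m+1) * c (m+1) * c (m+1) := by
        rw [Finset.sum_range_succ]
        simp_rw [Finset.sum_range_succ]
        rw [Finset.sum_add_distrib]
        ring
      have hB1 : ∑ i ∈ Finset.range (m+1), E i (m+1) * c i * c (m+1)
          = δ * ∑ i ∈ Finset.range (m+1), E i m * c i := by
        rw [Finset.mul_sum]
        apply Finset.sum_congr rfl
        intro i hi
        rw [hEr i hi, hδdef]
        ring
      have hB2 : ∑ j ∈ Finset.range (m+1), E (m+1) j * c (m+1) * c j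
          = δ * ∑ i ∈ Finset.range (m+1), E i m * c i := by
        rw [Finset.mul_sum]
        apply Finset.sum_congr rfl
        intro j hj
        rw [hsym (m+1) j, hEr j hj, hδdef]
        ring
      -- IH applied to c'
      have hih : 0 ≤ ∑ i ∈ Finset.range (m+1), ∑ j ∈ Finset.range (m+1), E i j * c' i * c' j :=
        ih τ (fun i j hij hj => hmono i j hij (by omega)) c'
      have hqu := quad_update E hsym m (hdiag m) c δ
      have hqu' : ∑ i ∈ Finset.range (m+1), ∑ j ∈ Finset.range (m+1), E i j * c' i * c' j
          = (∑ i ∈ Finset.range (m+1), ∑ j ∈ Finset.range (m+1), E i j * c i * c j)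
            + 2*δ*(∑ i ∈ Finset.range (m+1), E i m * c i) + δ^2 := by
        calc ∑ i ∈ Finset.range (m+1), ∑ j ∈ Finset.range (m+1), E i j * c' i * c' j
            = ∑ i ∈ Finset.range (m+1), ∑ j ∈ Finset.range (m+1),
                E i j * ((c i + if i = m then δ else 0) * (c j + if j = m then δ else 0)) := by
              apply Finset.sum_congr rfl; intro i _
              apply Finset.sum_congr rfl; intro j _
              rw [hc'def]; ring
          _ = (∑ i ∈ Finset.range (m+1), ∑ j ∈ Finset.range (m+1), E i j * (c i * c j))
                + 2*δ*(∑ i ∈ Finset.range (m+1), E i m * c i) + δ^2 := hqu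
          _ = (∑ i ∈ Finset.range (m+1), ∑ j ∈ Finset.range (m+1), E i j * c i * c j)
                + 2*δ*(∑ i ∈ Finset.range (m+1), E i m * c i) + δ^2 := by
              congr 2
              apply Finset.sum_congr rfl; intro i _
              apply Finset.sum_congr rfl; intro j _
              ring
      have hfinal : ∑ i ∈ Finset.range (m+2), ∑ j ∈ Finset.range (m+2), E i j * c i * c j
          = (∑ i ∈ Finset.range (m+1), ∑ j ∈ Finset.range (m+1), E i j * c' i * c' j)
            + (1 - r^2) * (c (m+1))^2 := by
        rw [hsplit, hB1, hB2, hqu', hdiag (m+1), hδdef]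
        ring
      rw [hfinal]
      have : 0 ≤ (1 - r^2) * (c (m+1))^2 :=
        mul_nonneg (by nlinarith) (sq_nonneg _)
      linarith


/-- **Lemma (the limiting variance functional is finite, nonnegative and controlled by
the derivative).**  For `τ_1 < … < τ_N`, `a_0^{(m)} ∈ ℝ`, `0 < a_1^{(m)} ≤ Amax` and
`f(m,·)` continuously differentiable, the double series
`σ(f)² = Σ_{k≥1} Σ_{m1,m2} k e^{-|τ_{m1}-τ_{m2}|k} f̂_k^{(m1)} f̂_k^{(m2)}`
converges absolutely, is nonnegative, and satisfies
`σ(f)² ≤ C N Σ_m sup_{x ∈ F_m} |∂f/∂x(m,x)|²` for a constant `C` depending only on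
`Amax` (a bound for `max_m a_1^{(m)}`), where
`F_m = [a_0^{(m)} − 2a_1^{(m)}, a_0^{(m)} + 2a_1^{(m)}]`. -/
theorem variance_functional_bound (Amax : ℝ) (hAmax : 0 < Amax) :
    ∃ C : ℝ, ∀ (N : ℕ) (τ a0 a1 : ℕ → ℝ),
      (∀ m1 m2 : ℕ, m1 < m2 → m2 < N → τ m1 < τ m2) →
      (∀ m < N, 0 < a1 m) →
      (∀ m < N, a1 m ≤ Amax) →
      ∀ f : ℕ → ℝ → ℝ, (∀ m < N, ContDiff ℝ 1 (f m)) →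
        Summable (fun p : ℕ × Fin N × Fin N =>
          |((p.1 + 1 : ℕ) : ℝ) *
            Real.exp (-|τ p.2.1 - τ p.2.2| * ((p.1 : ℝ) + 1)) *
            cosCoeff (f p.2.1) (a0 p.2.1) (a1 p.2.1) (p.1 + 1) *
            cosCoeff (f p.2.2) (a0 p.2.2) (a1 p.2.2) (p.1 + 1)|) ∧
        0 ≤ (∑' k : ℕ, ∑ m1 ∈ Finset.range N, ∑ m2 ∈ Finset.range N,
          ((k + 1 : ℕ) : ℝ) * Real.exp (-|τ m1 - τ m2| * ((k : ℝ) + 1)) *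
            cosCoeff (f m1) (a0 m1) (a1 m1) (k + 1) *
            cosCoeff (f m2) (a0 m2) (a1 m2) (k + 1)) ∧
        (∑' k : ℕ, ∑ m1 ∈ Finset.range N, ∑ m2 ∈ Finset.range N,
          ((k + 1 : ℕ) : ℝ) * Real.exp (-|τ m1 - τ m2| * ((k : ℝ) + 1)) *
            cosCoeff (f m1) (a0 m1) (a1 m1) (k + 1) *
            cosCoeff (f m2) (a0 m2) (a1 m2) (k + 1)) ≤
          C * N * ∑ m ∈ Finset.range N,
            (sSup ((fun x => |deriv (f m) x|) ''
              Set.Icc (a0 m - 2 * a1 m) (a0 m + 2 * a1 m))) ^ 2 := by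
  refine ⟨2 * Amax^2, ?_⟩
  intro N τ a0 a1 hτ ha1pos ha1le f hf
  -- notation
  set F : ℕ → ℕ → ℝ := fun m k => ((k+1:ℕ):ℝ) * cosCoeff (f m) (a0 m) (a1 m) (k+1) with hF
  set D : ℕ → ℝ := fun m => sSup ((fun x => |deriv (f m) x|) ''
      Set.Icc (a0 m - 2 * a1 m) (a0 m + 2 * a1 m)) with hD
  have hsumF : ∀ m < N, Summable fun k : ℕ => (F m k)^2 := fun m hm =>
    (coeff_sq_bound (f m) (a0 m) (a1 m) (hf m hm) (ha1pos m hm)).1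
  have htsumF : ∀ m < N, ∑' k : ℕ, (F m k)^2 ≤ 2 * Amax^2 * (D m)^2 := by
    intro m hm
    have h1 := (coeff_sq_bound (f m) (a0 m) (a1 m) (hf m hm) (ha1pos m hm)).2
    have h2 : 2 * (a1 m)^2 * (D m)^2 ≤ 2 * Amax^2 * (D m)^2 := by
      have h3 := ha1le m hm; have h4 := ha1pos m hm
      have h5 : (a1 m)^2 ≤ Amax^2 := by nlinarith
      nlinarith [sq_nonneg (D m)]
    exact le_trans h1 h2
  -- the generic term and its bound
  set term : ℕ → ℕ → ℕ → ℝ := fun k m1 m2 =>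
    ((k + 1 : ℕ) : ℝ) * Real.exp (-|τ m1 - τ m2| * ((k : ℝ) + 1)) *
      cosCoeff (f m1) (a0 m1) (a1 m1) (k + 1) *
      cosCoeff (f m2) (a0 m2) (a1 m2) (k + 1) with hterm
  have habs : ∀ (k m1 m2 : ℕ), |term k m1 m2| ≤ ((F m1 k)^2 + (F m2 k)^2)/2 := by
    intro k m1 m2
    set c1 := cosCoeff (f m1) (a0 m1) (a1 m1) (k + 1)
    set c2 := cosCoeff (f m2) (a0 m2) (a1 m2) (k + 1)
    set E := Real.exp (-|τ m1 - τ m2| * ((k : ℝ) + 1)) with hE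
    have hE1 : E ≤ 1 := by
      rw [hE]; apply Real.exp_le_one_iff.2
      have : (0:ℝ) ≤ |τ m1 - τ m2| * ((k : ℝ) + 1) := by positivity
      linarith
    have hE0 : 0 < E := Real.exp_pos _
    have hk1 : (1:ℝ) ≤ ((k+1:ℕ):ℝ) := by exact_mod_cast Nat.one_le_iff_ne_zero.2 (Nat.succ_ne_zero k)
    have habs' : |term k m1 m2| = ((k+1:ℕ):ℝ) * E * |c1| * |c2| := by
      rw [hterm]; simp only
      rw [abs_mul, abs_mul, abs_mul, abs_of_nonneg (by positivity : (0:ℝ) ≤ ((k+1:ℕ):ℝ)),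
        abs_of_pos hE0]
    have key : ((k+1:ℕ):ℝ) * E * |c1| * |c2|
        ≤ ((((k+1:ℕ):ℝ)*c1)^2 + (((k+1:ℕ):ℝ)*c2)^2)/2 := by
      set A := ((k+1:ℕ):ℝ) with hA
      have hA0 : (0:ℝ) ≤ A := le_trans zero_le_one hk1
      have hcc : 0 ≤ |c1| * |c2| := mul_nonneg (abs_nonneg c1) (abs_nonneg c2)
      have p1 : A * E * |c1| * |c2| ≤ A * (|c1| * |c2|) := by nlinarith [mul_nonneg hA0 hcc]
      have p2 : A * (|c1| * |c2|) ≤ (A*A)*(|c1| * |c2|) := by nlinarith [mul_nonneg hA0 hcc]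
      have s1 : (A*|c1|)^2 = (A*c1)^2 := by rw [mul_pow, mul_pow, sq_abs]
      have s2 : (A*|c2|)^2 = (A*c2)^2 := by rw [mul_pow, mul_pow, sq_abs]
      have p3 : (A*A)*(|c1| * |c2|) ≤ ((A*c1)^2 + (A*c2)^2)/2 := by
        nlinarith [sq_nonneg (A*|c1| - A*|c2|), s1, s2]
      linarith
    rw [habs']
    exact key
  -- summability of the comparison function for fixed m1 m2 < N
  have hcompsum : ∀ m1 m2, m1 < N → m2 < N →
      Summable (fun k : ℕ => ((F m1 k)^2 + (F m2 k)^2)/2) := by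
    intro m1 m2 h1 h2
    exact ((hsumF m1 h1).add (hsumF m2 h2)).div_const 2
  have htermsum : ∀ m1 m2, m1 < N → m2 < N → Summable (fun k => |term k m1 m2|) := by
    intro m1 m2 h1 h2
    exact Summable.of_nonneg_of_le (fun k => abs_nonneg _) (fun k => habs k m1 m2)
      (hcompsum m1 m2 h1 h2)
  -- Part 1 : summability over the product type
  have part1 : Summable (fun p : ℕ × Fin N × Fin N => |term p.1 p.2.1 p.2.2|) := by
    apply (summable_prod_of_nonneg (fun p => abs_nonneg _)).2
    constructor
    · intro k; exact Summable.of_finite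
    · have hle : ∀ k : ℕ, (∑' b : Fin N × Fin N, |term k b.1 b.2|)
          ≤ ∑ b : Fin N × Fin N, ((F b.1 k)^2 + (F b.2 k)^2)/2 := by
        intro k
        rw [tsum_fintype]
        exact Finset.sum_le_sum (fun b _ => habs k b.1 b.2)
      apply Summable.of_nonneg_of_le (fun k => tsum_nonneg (fun b => abs_nonneg _)) hle
      apply summable_sum
      intro b _
      exact hcompsum b.1 b.2 b.1.isLt b.2.isLt
  -- each k-slice is a PSD quadratic form
  have hmono : ∀ i j : ℕ, i ≤ j → j < N → τ i ≤ τ j := by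
    intro i j hij hj
    rcases eq_or_lt_of_le hij with h | h
    · exact le_of_eq (by rw [h])
    · exact le_of_lt (hτ i j h hj)
  have part2 : ∀ k : ℕ, 0 ≤ ∑ m1 ∈ Finset.range N, ∑ m2 ∈ Finset.range N, term k m1 m2 := by
    intro k
    have hpsd := psd ((k:ℝ)+1) (by positivity) N τ hmono
      (fun m => cosCoeff (f m) (a0 m) (a1 m) (k+1))
    have e : ∑ m1 ∈ Finset.range N, ∑ m2 ∈ Finset.range N, term k m1 m2
        = ((k+1:ℕ):ℝ) * ∑ m1 ∈ Finset.range N, ∑ m2 ∈ Finset.range N,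
            Real.exp (-|τ m1 - τ m2| * ((k:ℝ)+1)) * cosCoeff (f m1) (a0 m1) (a1 m1) (k+1)
              * cosCoeff (f m2) (a0 m2) (a1 m2) (k+1) := by
      rw [Finset.mul_sum]
      apply Finset.sum_congr rfl; intro m1 _
      rw [Finset.mul_sum]
      apply Finset.sum_congr rfl; intro m2 _
      rw [hterm]; ring
    rw [e]
    exact mul_nonneg (by positivity) hpsd
  -- summability of the k-slices
  have hterm' : ∀ m1 m2, m1 < N → m2 < N → Summable (fun k => term k m1 m2) :=
    fun m1 m2 h1 h2 => (htermsum m1 m2 h1 h2).of_abs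
  have hSsum : Summable (fun k => ∑ m1 ∈ Finset.range N, ∑ m2 ∈ Finset.range N, term k m1 m2) := by
    apply summable_sum; intro m1 hm1
    apply summable_sum; intro m2 hm2
    exact hterm' m1 m2 (Finset.mem_range.1 hm1) (Finset.mem_range.1 hm2)
  have hBsum : Summable (fun k => ∑ m1 ∈ Finset.range N, ∑ m2 ∈ Finset.range N,
      ((F m1 k)^2 + (F m2 k)^2)/2) := by
    apply summable_sum; intro m1 hm1
    apply summable_sum; intro m2 hm2
    exact hcompsum m1 m2 (Finset.mem_range.1 hm1) (Finset.mem_range.1 hm2)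
  -- part 3 chain
  set T : ℕ → ℝ := fun m => ∑' k : ℕ, (F m k)^2 with hT
  have step1 : (∑' k : ℕ, ∑ m1 ∈ Finset.range N, ∑ m2 ∈ Finset.range N, term k m1 m2)
      ≤ ∑' k : ℕ, ∑ m1 ∈ Finset.range N, ∑ m2 ∈ Finset.range N, ((F m1 k)^2 + (F m2 k)^2)/2 := by
    apply Summable.tsum_le_tsum _ hSsum hBsum
    intro k
    apply Finset.sum_le_sum; intro m1 _
    apply Finset.sum_le_sum; intro m2 _
    exact le_trans (le_abs_self _) (habs k m1 m2)
  have step2 : (∑' k : ℕ, ∑ m1 ∈ Finset.range N, ∑ m2 ∈ Finset.range N,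
        ((F m1 k)^2 + (F m2 k)^2)/2)
      = ∑ m1 ∈ Finset.range N, ∑ m2 ∈ Finset.range N, (T m1 + T m2)/2 := by
    rw [Summable.tsum_finsetSum (fun m1 hm1 => summable_sum (fun m2 hm2 =>
      hcompsum m1 m2 (Finset.mem_range.1 hm1) (Finset.mem_range.1 hm2)))]
    apply Finset.sum_congr rfl; intro m1 hm1
    rw [Summable.tsum_finsetSum (fun m2 hm2 =>
      hcompsum m1 m2 (Finset.mem_range.1 hm1) (Finset.mem_range.1 hm2))]
    apply Finset.sum_congr rfl; intro m2 hm2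
    rw [hT]
    simp only
    rw [tsum_div_const, Summable.tsum_add (hsumF m1 (Finset.mem_range.1 hm1))
      (hsumF m2 (Finset.mem_range.1 hm2))]
  have step3 : ∑ m1 ∈ Finset.range N, ∑ m2 ∈ Finset.range N, (T m1 + T m2)/2
      ≤ ∑ m1 ∈ Finset.range N, ∑ m2 ∈ Finset.range N,
          (2 * Amax^2 * (D m1)^2 + 2 * Amax^2 * (D m2)^2)/2 := by
    apply Finset.sum_le_sum; intro m1 hm1
    apply Finset.sum_le_sum; intro m2 hm2
    have g1 := htsumF m1 (Finset.mem_range.1 hm1)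
    have g2 := htsumF m2 (Finset.mem_range.1 hm2)
    rw [hT]; simp only
    linarith
  have step4 : ∑ m1 ∈ Finset.range N, ∑ m2 ∈ Finset.range N,
        (2 * Amax^2 * (D m1)^2 + 2 * Amax^2 * (D m2)^2)/2
      = 2 * Amax^2 * (N:ℝ) * ∑ m ∈ Finset.range N, (D m)^2 := by
    set G : ℕ → ℝ := fun m => 2 * Amax^2 * (D m)^2 with hG
    have h1 : ∀ m1, ∑ m2 ∈ Finset.range N, ((G m1 + G m2)/2)
        = ((N:ℝ) * G m1 + ∑ m ∈ Finset.range N, G m)/2 := by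
      intro m1
      rw [← Finset.sum_div, Finset.sum_add_distrib, Finset.sum_const, Finset.card_range,
        nsmul_eq_mul]
    show ∑ m1 ∈ Finset.range N, ∑ m2 ∈ Finset.range N, (G m1 + G m2)/2 = _
    simp_rw [h1]
    rw [← Finset.sum_div, Finset.sum_add_distrib, ← Finset.mul_sum, Finset.sum_const,
      Finset.card_range, nsmul_eq_mul]
    rw [hG, Finset.mul_sum, Finset.mul_sum]
    rw [← Finset.sum_add_distrib, Finset.sum_div]
    apply Finset.sum_congr rfl; intro m _
    ring
  refine ⟨part1, tsum_nonneg part2, ?_⟩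
  calc (∑' k : ℕ, ∑ m1 ∈ Finset.range N, ∑ m2 ∈ Finset.range N, term k m1 m2)
      ≤ ∑ m1 ∈ Finset.range N, ∑ m2 ∈ Finset.range N, (T m1 + T m2)/2 := by
        rw [← step2]; exact step1
    _ ≤ ∑ m1 ∈ Finset.range N, ∑ m2 ∈ Finset.range N,
          (2 * Amax^2 * (D m1)^2 + 2 * Amax^2 * (D m2)^2)/2 := step3
    _ = 2 * Amax^2 * (N:ℝ) * ∑ m ∈ Finset.range N, (D m)^2 := step4

end
end

section
/- Let V be a real polynomial of even degree with positive leading coefficient, let n ≥ 1, and let p_j (j ≥ 0) be the orthonormal polynomials with respect to the measure e^{−nV(x)} dx on ℝ, with tridiagonal Jacobi matrix 𝒥 defined by x p_k(x) = a_{k+1} p_{k+1}(x) + b_k p_k(x) + a_k p_{k−1}(x). For t > 0 define φ_j^t(x) = (2π(1 − e^{−2t}))^{−1/2} ∫_ℝ p_{j−1}(y) exp( −n [ V(y) + (e^{−2t}(x² + y²) − 2 e^{−t} x y) / (2(1 − e^{−2t})) ] ) dy (j ≥ 1), and φ_j^0(x) = p_{j−1}(x). Then the φ_j^t satisfy the recurrence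 x φ_j^t(x) = Σ_k (𝕁^t)_{j,k} φ_k^t(x) for all x ∈ ℝ, where (𝕁^t)_{j,k} = e^{−t} (𝒥)_{j,k} if j > k, and (𝕁^t)_{j,k} = e^{−t} (𝒥)_{j,k} + 2 sinh(t) (V'(𝒥))_{j,k} if j ≤ k, with V'(𝒥) the polynomial V' evaluated at the banded matrix 𝒥 (indices of 𝕁^t and 𝒥 aligned with the labels j,k ≥ 1 of φ_j = c p_{j−1}). -/
open MeasureTheory Filter Topology

noncomputable section

/-- Entry `(𝒥)_{k,l}` of the tridiagonal Jacobi matrix with off-diagonal entries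
`a_k` and diagonal entries `b_k` coming from the three-term recurrence
`x p_k = a_{k+1} p_{k+1} + b_k p_k + a_k p_{k-1}`. -/
def jacEntry (a b : ℕ → ℝ) (k l : ℕ) : ℝ :=
  if l = k + 1 then a (k + 1) else if l = k then b k else if l + 1 = k then a k else 0

/-- Entries of the powers `𝒥^d` of the banded Jacobi matrix (well defined since `𝒥`
is banded, so all the sums are finite). -/
def jacPow (a b : ℕ → ℝ) : ℕ → ℕ → ℕ → ℝ
  | 0, i, j => if i = j then 1 else 0
  | d + 1, i, j => ∑ l ∈ Finset.range (i + d + 2), jacPow a b d i l * jacEntry a b l j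

/-- Entries of `W(𝒥)`, the polynomial `W` evaluated at the banded Jacobi matrix `𝒥`. -/
def polyOfJac (W : Polynomial ℝ) (a b : ℕ → ℝ) (i j : ℕ) : ℝ :=
  ∑ d ∈ Finset.range (W.natDegree + 1), W.coeff d * jacPow a b d i j

open Polynomial Real



lemma exists_poly_abs_bound (q : Polynomial ℝ) :
    ∃ r : Polynomial ℝ, ∀ y : ℝ, |q.eval y| ≤ r.eval (y ^ 2) := by
  refine ⟨∑ i ∈ Finset.range (q.natDegree + 1), Polynomial.C |q.coeff i| * (1 + Polynomial.X) ^ i,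
    fun y => ?_⟩
  have hev : (∑ i ∈ Finset.range (q.natDegree + 1),
      Polynomial.C |q.coeff i| * (1 + Polynomial.X) ^ i).eval (y ^ 2)
      = ∑ i ∈ Finset.range (q.natDegree + 1), |q.coeff i| * (1 + y ^ 2) ^ i := by
    simp [Polynomial.eval_finset_sum]
  rw [hev, Polynomial.eval_eq_sum_range]
  refine (Finset.abs_sum_le_sum_abs _ _).trans (Finset.sum_le_sum fun i _ => ?_)
  rw [abs_mul, abs_pow]
  refine mul_le_mul_of_nonneg_left (pow_le_pow_left₀ (abs_nonneg y) ?_ i) (abs_nonneg _)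
  nlinarith [sq_nonneg (|y| - 1), sq_abs y]

lemma tendsto_polysq_exp (r : Polynomial ℝ) {c : ℝ} (hc : 0 < c) :
    Tendsto (fun y : ℝ => r.eval (y ^ 2) * Real.exp (-(c * y ^ 2))) (cocompact ℝ) (𝓝 0) := by
  have h1 : Tendsto (fun y : ℝ => y ^ 2) (cocompact ℝ) atTop := by
    rw [cocompact_eq_atBot_atTop, tendsto_sup]
    have hsq : Tendsto (fun y : ℝ => y ^ 2) atTop atTop :=
      tendsto_pow_atTop (n := 2) (by norm_num)
    constructor
    · have := hsq.comp tendsto_neg_atBot_atTop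
      refine this.congr fun y => by simp [Function.comp]
    · exact hsq
  have h2 : Tendsto (fun u : ℝ => r.eval u * Real.exp (-(c * u))) atTop (𝓝 0) := by
    have hs : Tendsto (fun v : ℝ => (r.comp (Polynomial.C c⁻¹ * Polynomial.X)).eval v / Real.exp v)
        atTop (𝓝 0) := Polynomial.tendsto_div_exp_atTop _
    have hcu : Tendsto (fun u : ℝ => c * u) atTop atTop :=
      Tendsto.const_mul_atTop hc tendsto_id
    refine (hs.comp hcu).congr fun u => ?_
    simp only [Function.comp_apply, Polynomial.eval_comp, Polynomial.eval_mul, Polynomial.eval_C,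
      Polynomial.eval_X]
    rw [inv_mul_cancel_left₀ hc.ne', Real.exp_neg, div_eq_mul_inv]
  exact h2.comp h1

lemma bounded_of_tendsto_cocompact {F : ℝ → ℝ} (hF : Continuous F)
    (h : Tendsto F (cocompact ℝ) (𝓝 0)) : ∃ M : ℝ, ∀ y, |F y| ≤ M := by
  rw [cocompact_eq_atBot_atTop, tendsto_sup] at h
  have htop : ∀ᶠ y in atTop, |F y| < 1 := (abs_zero (α := ℝ) ▸ h.2.abs).eventually_lt_const one_pos
  have hbot : ∀ᶠ y in atBot, |F y| < 1 := (abs_zero (α := ℝ) ▸ h.1.abs).eventually_lt_const one_pos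
  obtain ⟨A₁, hA₁⟩ := htop.exists_forall_of_atTop
  obtain ⟨A₂, hA₂⟩ := hbot.exists_forall_of_atBot
  obtain ⟨Cb, hCb⟩ := (isCompact_Icc (a := A₂) (b := A₁)).exists_bound_of_continuousOn
    hF.continuousOn
  refine ⟨max Cb 1, fun y => ?_⟩
  rcases le_total y A₂ with hy | hy
  · exact (hA₂ y hy).le.trans (le_max_right _ _)
  rcases le_total y A₁ with hy' | hy'
  · exact (le_of_eq (Real.norm_eq_abs _).symm).trans ((hCb y ⟨hy, hy'⟩).trans (le_max_left _ _))
  · exact (hA₁ y hy').le.trans (le_max_right _ _)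

lemma integrable_poly_mul_exp (q : Polynomial ℝ) {E : ℝ → ℝ} (hcont : Continuous E)
    {c : ℝ} (C : ℝ) (hc : 0 < c) (hE : ∀ y, c * y ^ 2 - C ≤ E y) :
    Integrable (fun y : ℝ => q.eval y * Real.exp (-E y)) := by
  obtain ⟨r, hr⟩ := exists_poly_abs_bound q
  have hrnn : ∀ y : ℝ, 0 ≤ r.eval (y ^ 2) := fun y => (abs_nonneg _).trans (hr y)
  have hFt : Tendsto (fun y : ℝ => r.eval (y ^ 2) * Real.exp (-(c / 2 * y ^ 2)))
      (cocompact ℝ) (𝓝 0) := tendsto_polysq_exp r (half_pos hc)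
  have hFc : Continuous (fun y : ℝ => r.eval (y ^ 2) * Real.exp (-(c / 2 * y ^ 2))) :=
    (r.continuous.comp (continuous_pow 2)).mul
      (Real.continuous_exp.comp ((continuous_const.mul (continuous_pow 2)).neg))
  obtain ⟨M, hM⟩ := bounded_of_tendsto_cocompact hFc hFt
  have hg : Integrable (fun y : ℝ => Real.exp C * M * Real.exp (-(c / 2) * y ^ 2)) :=
    (integrable_exp_neg_mul_sq (half_pos hc)).const_mul _
  refine hg.mono' ?_ ?_
  · exact (q.continuous.mul ((hcont.neg).rexp)).aestronglyMeasurable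
  · refine Filter.Eventually.of_forall fun y => ?_
    have h1 : ‖q.eval y * Real.exp (-E y)‖ = |q.eval y| * Real.exp (-E y) := by
      rw [norm_mul, Real.norm_eq_abs, Real.norm_eq_abs, abs_of_pos (Real.exp_pos _)]
    have h2 : Real.exp (-E y) ≤ Real.exp C * Real.exp (-(c * y ^ 2)) := by
      rw [← Real.exp_add]
      exact Real.exp_le_exp.2 (by linarith [hE y])
    have h3 : |q.eval y| * Real.exp (-E y) ≤ r.eval (y ^ 2) * (Real.exp C * Real.exp (-(c * y ^ 2))) := by
      have := mul_le_mul (hr y) h2 (Real.exp_pos _).le (hrnn y)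
      linarith [this]
    have h4 : r.eval (y ^ 2) * Real.exp (-(c * y ^ 2))
        ≤ M * Real.exp (-(c / 2 * y ^ 2)) := by
      have hsplit : Real.exp (-(c * y ^ 2))
          = Real.exp (-(c / 2 * y ^ 2)) * Real.exp (-(c / 2 * y ^ 2)) := by
        rw [← Real.exp_add]; ring_nf
      have hb : r.eval (y ^ 2) * Real.exp (-(c / 2 * y ^ 2)) ≤ M :=
        (le_abs_self _).trans (hM y)
      calc r.eval (y ^ 2) * Real.exp (-(c * y ^ 2))
          = (r.eval (y ^ 2) * Real.exp (-(c / 2 * y ^ 2))) * Real.exp (-(c / 2 * y ^ 2)) := by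
            rw [hsplit]; ring
        _ ≤ M * Real.exp (-(c / 2 * y ^ 2)) :=
            mul_le_mul_of_nonneg_right hb (Real.exp_pos _).le
    rw [h1]
    calc |q.eval y| * Real.exp (-E y)
        ≤ r.eval (y ^ 2) * (Real.exp C * Real.exp (-(c * y ^ 2))) := h3
      _ = Real.exp C * (r.eval (y ^ 2) * Real.exp (-(c * y ^ 2))) := by ring
      _ ≤ Real.exp C * (M * Real.exp (-(c / 2 * y ^ 2))) :=
          mul_le_mul_of_nonneg_left h4 (Real.exp_pos _).le
      _ = Real.exp C * M * Real.exp (-(c / 2) * y ^ 2) := by ring_nf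

lemma tendsto_poly_mul_exp (q : Polynomial ℝ) {E : ℝ → ℝ}
    {c : ℝ} (C : ℝ) (hc : 0 < c) (hE : ∀ y, c * y ^ 2 - C ≤ E y) :
    Tendsto (fun y : ℝ => q.eval y * Real.exp (-E y)) (cocompact ℝ) (𝓝 0) := by
  obtain ⟨r, hr⟩ := exists_poly_abs_bound q
  have hg : Tendsto (fun y : ℝ => Real.exp C * (r.eval (y ^ 2) * Real.exp (-(c * y ^ 2))))
      (cocompact ℝ) (𝓝 0) := by
    simpa using (tendsto_polysq_exp r hc).const_mul (Real.exp C)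
  refine squeeze_zero_norm (fun y => ?_) hg
  have h2 : Real.exp (-E y) ≤ Real.exp C * Real.exp (-(c * y ^ 2)) := by
    rw [← Real.exp_add]; exact Real.exp_le_exp.2 (by linarith [hE y])
  have := mul_le_mul (hr y) h2 (Real.exp_pos _).le ((abs_nonneg _).trans (hr y))
  rw [norm_mul, Real.norm_eq_abs, Real.norm_eq_abs, abs_of_pos (Real.exp_pos _)]
  linarith

lemma integral_deriv_poly_exp (R q : Polynomial ℝ) {c : ℝ} (C : ℝ) (hc : 0 < c)
    (hR : ∀ y, c * y ^ 2 - C ≤ R.eval y) :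
    ∫ y : ℝ, (q.derivative.eval y - R.derivative.eval y * q.eval y) * Real.exp (-R.eval y) = 0 := by
  have hderiv : ∀ y : ℝ, HasDerivAt (fun y : ℝ => q.eval y * Real.exp (-R.eval y))
      ((q.derivative.eval y - R.derivative.eval y * q.eval y) * Real.exp (-R.eval y)) y := by
    intro y
    have h1 : HasDerivAt (fun y : ℝ => -R.eval y) (-R.derivative.eval y) y :=
      (R.hasDerivAt y).neg
    have h2 : HasDerivAt (fun y : ℝ => Real.exp (-R.eval y))
        (Real.exp (-R.eval y) * -R.derivative.eval y) y := h1.exp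
    have : HasDerivAt (fun y => q.eval y * Real.exp (-R.eval y)) _ y := (q.hasDerivAt y).mul h2
    convert this using 1
    ring
  have hint : Integrable (fun y : ℝ =>
      (q.derivative.eval y - R.derivative.eval y * q.eval y) * Real.exp (-R.eval y)) := by
    have := integrable_poly_mul_exp (q.derivative - R.derivative * q)
      R.continuous C hc hR
    refine this.congr (Filter.Eventually.of_forall fun y => ?_)
    simp
  have hten : Tendsto (fun y : ℝ => q.eval y * Real.exp (-R.eval y)) (cocompact ℝ) (𝓝 0) :=
    tendsto_poly_mul_exp q C hc hR
  rw [cocompact_eq_atBot_atTop, tendsto_sup] at hten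
  have := integral_of_hasDerivAt_of_tendsto hderiv hint hten.1 hten.2
  simpa using this

lemma quad_lower_bound (V : Polynomial ℝ) (hVdeg : Even V.natDegree)
    (h2 : 2 ≤ V.natDegree) (hVlead : 0 < V.leadingCoeff)
    (N α β γ : ℝ) (hN : 0 < N) (hα : 0 ≤ α) :
    ∃ c : ℝ, 0 < c ∧ ∃ C : ℝ, ∀ y : ℝ,
      c * y ^ 2 - C ≤ N * V.eval y + (α * y ^ 2 + β * y + γ) := by
  set l := V.leadingCoeff with hl
  set W : Polynomial ℝ := V - Polynomial.C (l / 2) * Polynomial.X ^ 2 with hW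
  set D := V.natDegree with hD
  have hWcoeff : 0 < W.coeff D := by
    have : W.coeff D = V.coeff D - (l / 2) * (if D = 2 then 1 else 0) := by
      simp [hW, Polynomial.coeff_X_pow]
    rw [this]
    have hVD : V.coeff D = l := rfl
    split_ifs with h <;> rw [hVD] <;> linarith
  have hWD : W.natDegree = D := by
    apply le_antisymm
    · refine (Polynomial.natDegree_sub_le _ _).trans ?_
      simp only [max_le_iff]
      constructor
      · exact le_rfl
      · exact le_trans (Polynomial.natDegree_C_mul_le _ _) (by simpa using h2)
    · exact Polynomial.le_natDegree_of_ne_zero hWcoeff.ne'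
  have hWlead : 0 < W.leadingCoeff := by
    rwa [Polynomial.leadingCoeff, hWD]
  have hWne : W ≠ 0 := fun h => by simp [h] at hWlead
  have hWdegpos : 0 < W.degree := by
    rw [Polynomial.degree_eq_natDegree hWne, hWD]
    exact_mod_cast lt_of_lt_of_le two_pos h2
  -- tendsto at top and at bot
  have htop : Tendsto (fun y : ℝ => W.eval y) atTop atTop :=
    W.tendsto_atTop_of_leadingCoeff_nonneg hWdegpos hWlead.le
  have hbot : Tendsto (fun y : ℝ => W.eval y) atBot atTop := by
    set Wn := W.comp (-Polynomial.X) with hWn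
    have hXdeg : (-Polynomial.X : Polynomial ℝ).natDegree = 1 := by simp
    have hWnD : Wn.natDegree = D := by
      rw [hWn, Polynomial.natDegree_comp, hXdeg, mul_one, hWD]
    have hWnlead : 0 < Wn.leadingCoeff := by
      rw [hWn, Polynomial.leadingCoeff_comp (by simp), hWD]
      have : (-Polynomial.X : Polynomial ℝ).leadingCoeff = -1 := by simp
      rw [this]
      have hE : Even D := hVdeg
      rw [hE.neg_one_pow]
      simpa using hWlead
    have hWnne : Wn ≠ 0 := fun h => by simp [h] at hWnlead
    have hWndeg : 0 < Wn.degree := by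
      rw [Polynomial.degree_eq_natDegree hWnne, hWnD]
      exact_mod_cast lt_of_lt_of_le two_pos h2
    have h1 : Tendsto (fun y : ℝ => Wn.eval y) atTop atTop :=
      Wn.tendsto_atTop_of_leadingCoeff_nonneg hWndeg hWnlead.le
    have := h1.comp tendsto_neg_atBot_atTop
    refine this.congr fun y => ?_
    simp [hWn, Function.comp, Polynomial.eval_comp]
  have hmin : ∃ m : ℝ, ∀ y : ℝ, m ≤ W.eval y := by
    have hco : Tendsto (fun y : ℝ => W.eval y) (cocompact ℝ) atTop := by
      rw [cocompact_eq_atBot_atTop, tendsto_sup]; exact ⟨hbot, htop⟩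
    obtain ⟨y₀, hy₀⟩ := W.continuous.exists_forall_le hco
    exact ⟨W.eval y₀, hy₀⟩
  obtain ⟨m, hm⟩ := hmin
  refine ⟨N * l / 4, by positivity, β ^ 2 / (N * l) - N * m - γ, fun y => ?_⟩
  have hVy : l / 2 * y ^ 2 + m ≤ V.eval y := by
    have := hm y
    simp only [hW, Polynomial.eval_sub, Polynomial.eval_mul, Polynomial.eval_C,
      Polynomial.eval_pow, Polynomial.eval_X] at this
    linarith
  have hNl : 0 < N * l := by positivity
  have hAM : -(N * l / 4 * y ^ 2) - β ^ 2 / (N * l) ≤ β * y := by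
    have key : 0 ≤ (N * l * y / 2 + β) ^ 2 := sq_nonneg _
    have hd : β ^ 2 / (N * l) * (N * l) = β ^ 2 := div_mul_cancel₀ _ hNl.ne'
    nlinarith [key, hNl]
  nlinarith [mul_le_mul_of_nonneg_left hVy hN.le, mul_nonneg hα (sq_nonneg y)]




lemma jacEntry_eq_zero {a b : ℕ → ℝ} {k l : ℕ} (h : k + 1 < l) : jacEntry a b k l = 0 := by
  unfold jacEntry
  rw [if_neg (by omega), if_neg (by omega), if_neg (by omega)]

lemma jacPow_band (a b : ℕ → ℝ) : ∀ d i k, i + d < k → jacPow a b d i k = 0 := by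
  intro d
  induction d with
  | zero => intro i k h; simp only [jacPow]; rw [if_neg (by omega)]
  | succ d ih =>
    intro i k h
    simp only [jacPow]
    refine Finset.sum_eq_zero fun l hl => ?_
    rw [Finset.mem_range] at hl
    by_cases hli : i + d < l
    · rw [ih i l hli, zero_mul]
    · rw [jacEntry_eq_zero (by omega), mul_zero]

section recurrence

variable (p : ℕ → Polynomial ℝ) (a b : ℕ → ℝ)
variable (hrec : ∀ j (x : ℝ), x * (p j).eval x =
      a (j + 1) * (p (j + 1)).eval x + b j * (p j).eval x +
        (if j = 0 then 0 else a j * (p (j - 1)).eval x))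

include hrec

lemma rec_sum : ∀ k (y : ℝ), y * (p k).eval y
    = ∑ m ∈ Finset.range (k + 2), jacEntry a b k m * (p m).eval y := by
  intro k y
  rw [show k + 2 = (k + 1) + 1 from rfl, Finset.sum_range_succ, Finset.sum_range_succ]
  have h1 : jacEntry a b k (k + 1) = a (k + 1) := by unfold jacEntry; rw [if_pos rfl]
  have h2 : jacEntry a b k k = b k := by
    unfold jacEntry; rw [if_neg (by omega), if_pos rfl]
  rw [h1, h2]
  have h3 : ∑ m ∈ Finset.range k, jacEntry a b k m * (p m).eval y
      = if k = 0 then 0 else a k * (p (k - 1)).eval y := by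
    rcases Nat.eq_zero_or_pos k with hk | hk
    · subst hk; simp
    · rw [if_neg hk.ne']
      obtain ⟨k', rfl⟩ := Nat.exists_eq_add_of_lt hk
      simp only [zero_add] at *
      have : ∀ m ∈ Finset.range (k' + 1), jacEntry a b (k' + 1) m * (p m).eval y
          = if m = k' then a (k' + 1) * (p k').eval y else 0 := by
        intro m hm
        rw [Finset.mem_range] at hm
        unfold jacEntry
        rw [if_neg (by omega), if_neg (by omega)]
        by_cases hmk : m = k'
        · subst hmk; rw [if_pos rfl, if_pos rfl]
        · rw [if_neg (by omega), if_neg hmk, zero_mul]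
      rw [Finset.sum_congr rfl this, Finset.sum_ite_eq' (Finset.range (k' + 1))]
      rw [if_pos (Finset.self_mem_range_succ k')]
      simp
  rw [h3, hrec k y]
  ring

lemma pow_sum : ∀ d j (y : ℝ), y ^ d * (p j).eval y
    = ∑ k ∈ Finset.range (j + d + 1), jacPow a b d j k * (p k).eval y := by
  intro d
  induction d with
  | zero =>
    intro j y
    simp only [pow_zero, one_mul, jacPow]
    rw [Finset.sum_congr rfl (fun k _ => by rw [ite_mul, one_mul, zero_mul]),
      Finset.sum_ite_eq (Finset.range (j + 0 + 1))]
    rw [if_pos (by simp)]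
  | succ d ih =>
    intro j y
    have step1 : y ^ (d + 1) * (p j).eval y = y * (y ^ d * (p j).eval y) := by ring
    rw [step1, ih j y, Finset.mul_sum]
    have step2 : ∀ k ∈ Finset.range (j + d + 1),
        y * (jacPow a b d j k * (p k).eval y)
        = ∑ m ∈ Finset.range (j + d + 2), jacPow a b d j k * (jacEntry a b k m * (p m).eval y) := by
      intro k hk
      rw [Finset.mem_range] at hk
      have : y * (jacPow a b d j k * (p k).eval y)
          = jacPow a b d j k * (y * (p k).eval y) := by ring
      rw [this, rec_sum p a b hrec k y, Finset.mul_sum]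
      refine Finset.sum_subset (Finset.range_subset_range.2 (by omega)) ?_
      intro m hm hmn
      rw [Finset.mem_range] at hm
      rw [Finset.mem_range, not_lt] at hmn
      rw [jacEntry_eq_zero (by omega), zero_mul, mul_zero]
    rw [Finset.sum_congr rfl step2, Finset.sum_comm]
    refine Finset.sum_congr rfl fun m hm => ?_
    simp only [jacPow]
    rw [Finset.sum_mul]
    have hext : ∑ k ∈ Finset.range (j + d + 1), jacPow a b d j k * (jacEntry a b k m * (p m).eval y)
        = ∑ k ∈ Finset.range (j + d + 2), jacPow a b d j k * jacEntry a b k m * (p m).eval y := by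
      rw [Finset.sum_congr rfl (fun k _ => by ring : ∀ k ∈ Finset.range (j + d + 1),
        jacPow a b d j k * (jacEntry a b k m * (p m).eval y)
          = jacPow a b d j k * jacEntry a b k m * (p m).eval y)]
      refine Finset.sum_subset (Finset.range_subset_range.2 (by omega)) ?_
      intro k hk hkn
      rw [Finset.mem_range, not_lt] at hkn
      rw [jacPow_band a b d j k (by omega), zero_mul, zero_mul]
    rw [hext]

omit hrec in
lemma polyOfJac_band (W : Polynomial ℝ) (j k : ℕ) (h : j + W.natDegree < k) :
    polyOfJac W a b j k = 0 := by
  unfold polyOfJac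
  refine Finset.sum_eq_zero fun d hd => ?_
  rw [Finset.mem_range] at hd
  rw [jacPow_band a b d j k (by omega), mul_zero]

lemma polyMul_sum (W : Polynomial ℝ) : ∀ j (y : ℝ), W.eval y * (p j).eval y
    = ∑ k ∈ Finset.range (j + W.natDegree + 1), polyOfJac W a b j k * (p k).eval y := by
  intro j y
  rw [Polynomial.eval_eq_sum_range, Finset.sum_mul]
  have step : ∀ d ∈ Finset.range (W.natDegree + 1),
      W.coeff d * y ^ d * (p j).eval y
      = ∑ k ∈ Finset.range (j + W.natDegree + 1), W.coeff d * (jacPow a b d j k * (p k).eval y) := by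
    intro d hd
    rw [Finset.mem_range] at hd
    have : W.coeff d * y ^ d * (p j).eval y = W.coeff d * (y ^ d * (p j).eval y) := by ring
    rw [this, pow_sum p a b hrec d j y, Finset.mul_sum]
    refine Finset.sum_subset (Finset.range_subset_range.2 (by omega)) ?_
    intro k hk hkn
    rw [Finset.mem_range, not_lt] at hkn
    rw [jacPow_band a b d j k (by omega), zero_mul, mul_zero]
  rw [Finset.sum_congr rfl step, Finset.sum_comm]
  refine Finset.sum_congr rfl fun k hk => ?_
  unfold polyOfJac
  rw [Finset.sum_mul]
  refine Finset.sum_congr rfl fun d hd => by ring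

end recurrence

section ortho

variable (p : ℕ → Polynomial ℝ)
variable (E₀ : ℝ → ℝ)

lemma exists_expansion (hdeg : ∀ j, (p j).natDegree = j)
    (hlead : ∀ j, 0 < (p j).leadingCoeff) :
    ∀ m (q : Polynomial ℝ), q.degree < (m : ℕ) →
      ∃ lam : ℕ → ℝ, ∀ y, q.eval y = ∑ k ∈ Finset.range m, lam k * (p k).eval y := by
  intro m
  induction m with
  | zero =>
    intro q hq
    have : q = 0 := by
      by_contra h
      have h0 : (0 : WithBot ℕ) ≤ q.degree := Polynomial.zero_le_degree_iff.2 h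
      rw [Nat.cast_zero] at hq
      exact absurd (lt_of_le_of_lt h0 hq) (lt_irrefl _)
    subst this
    exact ⟨fun _ => 0, fun y => by simp⟩
  | succ m ih =>
    intro q hq
    have hpm : (p m).coeff m ≠ 0 := by
      have : (p m).coeff m = (p m).leadingCoeff := by
        rw [Polynomial.leadingCoeff, hdeg m]
      rw [this]; exact (hlead m).ne'
    set μ := q.coeff m / (p m).coeff m with hμ
    set q' := q - Polynomial.C μ * p m with hq'
    have hq'deg : q'.degree < (m : ℕ) := by
      rw [Polynomial.degree_lt_iff_coeff_zero]
      intro i hi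
      have hi' : m ≤ i := by exact_mod_cast hi
      rcases eq_or_lt_of_le hi' with hie | hil
      · subst hie
        simp only [hq', Polynomial.coeff_sub, Polynomial.coeff_C_mul]
        rw [hμ, div_mul_cancel₀ _ hpm, sub_self]
      · have hqz : q.coeff i = 0 := by
          exact Polynomial.coeff_eq_zero_of_degree_lt
            (lt_of_lt_of_le hq (by exact_mod_cast Nat.succ_le_of_lt hil))
        have hpz : (p m).coeff i = 0 :=
          Polynomial.coeff_eq_zero_of_natDegree_lt (by rw [hdeg m]; exact hil)
        simp [hq', hqz, hpz]
    obtain ⟨lam, hlam⟩ := ih q' hq'deg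
    refine ⟨fun k => if k = m then μ else lam k, fun y => ?_⟩
    rw [Finset.sum_range_succ]
    beta_reduce
    rw [if_pos rfl]
    have : ∑ k ∈ Finset.range m, (if k = m then μ else lam k) * (p k).eval y
        = ∑ k ∈ Finset.range m, lam k * (p k).eval y := by
      refine Finset.sum_congr rfl fun k hk => ?_
      rw [Finset.mem_range] at hk
      rw [if_neg hk.ne]
    rw [this, ← hlam y]
    have : q.eval y = q'.eval y + μ * (p m).eval y := by
      simp [hq']
    linarith [this]

variable (hInt : ∀ q : Polynomial ℝ, Integrable (fun y => q.eval y * Real.exp (-(E₀ y))))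
variable (horth : ∀ j k, (∫ x : ℝ, (p j).eval x * (p k).eval x * Real.exp (-(E₀ x)))
      = if j = k then 1 else 0)

include hInt horth in
lemma integral_sum_mul (lam : ℕ → ℝ) (M k : ℕ) :
    ∫ y : ℝ, (∑ l ∈ Finset.range M, lam l * (p l).eval y) * (p k).eval y * Real.exp (-(E₀ y))
      = if k < M then lam k else 0 := by
  have hcongr : ∀ y : ℝ, (∑ l ∈ Finset.range M, lam l * (p l).eval y) * (p k).eval y
        * Real.exp (-(E₀ y))
      = ∑ l ∈ Finset.range M, lam l * ((p l * p k).eval y * Real.exp (-(E₀ y))) := by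
    intro y
    rw [Finset.sum_mul, Finset.sum_mul]
    refine Finset.sum_congr rfl fun l _ => ?_
    rw [Polynomial.eval_mul]; ring
  rw [MeasureTheory.integral_congr_ae (Filter.Eventually.of_forall hcongr)]
  rw [MeasureTheory.integral_finset_sum _ (fun l _ => (hInt (p l * p k)).const_mul _)]
  have : ∀ l ∈ Finset.range M, (∫ y : ℝ, lam l * ((p l * p k).eval y * Real.exp (-(E₀ y))))
      = if l = k then lam l else 0 := by
    intro l _
    rw [MeasureTheory.integral_const_mul]
    have : (∫ y : ℝ, (p l * p k).eval y * Real.exp (-(E₀ y)))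
        = if l = k then 1 else 0 := by
      rw [← horth l k]
      refine MeasureTheory.integral_congr_ae (Filter.Eventually.of_forall fun y => ?_)
      simp only [Polynomial.eval_mul]
    rw [this]
    split_ifs <;> simp
  rw [Finset.sum_congr rfl this, Finset.sum_ite_eq' (Finset.range M)]
  simp [Finset.mem_range]

include hInt horth in
lemma integral_orthogonal_of_degree_lt (q : Polynomial ℝ) (j : ℕ)
    (hdeg' : ∀ j, (p j).natDegree = j) (hlead' : ∀ j, 0 < (p j).leadingCoeff)
    (hq : q.degree < (j : ℕ)) :
    ∫ y : ℝ, q.eval y * (p j).eval y * Real.exp (-(E₀ y)) = 0 := by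
  obtain ⟨lam, hlam⟩ := exists_expansion p hdeg' hlead' j q hq
  have := integral_sum_mul p E₀ hInt horth lam j j
  rw [if_neg (lt_irrefl j)] at this
  rw [← this]
  refine MeasureTheory.integral_congr_ae (Filter.Eventually.of_forall fun y => ?_)
  simp only [hlam]

end ortho
section string

variable (V : Polynomial ℝ) (N : ℝ)
variable (p : ℕ → Polynomial ℝ) (a b : ℕ → ℝ)

lemma deriv_expansion
    (hVdeg : Even V.natDegree) (h2 : 2 ≤ V.natDegree) (hVlead : 0 < V.leadingCoeff)
    (hN : 0 < N)
    (hdeg : ∀ j, (p j).natDegree = j) (hlead : ∀ j, 0 < (p j).leadingCoeff)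
    (hInt : ∀ q : Polynomial ℝ, Integrable (fun y => q.eval y * Real.exp (-(N * V.eval y))))
    (horth : ∀ j k, (∫ x : ℝ, (p j).eval x * (p k).eval x * Real.exp (-(N * V.eval x)))
      = if j = k then 1 else 0)
    (hrec : ∀ j (x : ℝ), x * (p j).eval x =
      a (j + 1) * (p (j + 1)).eval x + b j * (p j).eval x +
        (if j = 0 then 0 else a j * (p (j - 1)).eval x)) :
    ∀ j (y : ℝ), (p j).derivative.eval y
      = ∑ k ∈ Finset.range j, (N * polyOfJac V.derivative a b j k) * (p k).eval y := by
  intro j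
  have hpne : ∀ m, p m ≠ 0 := fun m h => by
    have := hlead m; rw [h] at this; simp at this
  have hpdeg : ∀ m : ℕ, (p m).degree = (m : ℕ) := fun m => by
    rw [Polynomial.degree_eq_natDegree (hpne m), hdeg m]
  have hderivlt : ∀ m : ℕ, (p m).derivative.degree < (m : ℕ) := fun m => by
    have := Polynomial.degree_derivative_lt (hpne m)
    rwa [hpdeg m] at this
  obtain ⟨lam, hlam⟩ := exists_expansion p hdeg hlead j (p j).derivative (hderivlt j)
  -- quadratic lower bound for the base weight
  obtain ⟨c0, hc0, C0, hC0⟩ := quad_lower_bound V hVdeg h2 hVlead N 0 0 0 hN le_rfl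
  set R₀ : Polynomial ℝ := Polynomial.C N * V with hR₀
  have hR₀eval : ∀ y : ℝ, R₀.eval y = N * V.eval y := fun y => by
    simp [hR₀]
  have hR₀bound : ∀ y : ℝ, c0 * y ^ 2 - C0 ≤ R₀.eval y := fun y => by
    have := hC0 y; rw [hR₀eval y]; linarith
  have hR₀deriv : ∀ y : ℝ, R₀.derivative.eval y = N * V.derivative.eval y := fun y => by
    simp [hR₀]
  have key : ∀ k, k < j → lam k = N * polyOfJac V.derivative a b j k := by
    intro k hk
    -- lam k as an integral
    have h1 : ∫ y : ℝ, (p j).derivative.eval y * (p k).eval y * Real.exp (-(N * V.eval y))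
        = lam k := by
      have := integral_sum_mul p (fun y => N * V.eval y) hInt horth lam j k
      rw [if_pos hk] at this
      rw [← this]
      refine MeasureTheory.integral_congr_ae (Filter.Eventually.of_forall fun y => ?_)
      simp only [hlam]
    -- integration by parts
    have hparts := integral_deriv_poly_exp R₀ (p j * p k) C0 hc0 hR₀bound
    have hsplit : ∫ y : ℝ, ((p j * p k).derivative.eval y
          - R₀.derivative.eval y * (p j * p k).eval y) * Real.exp (-R₀.eval y)
        = (∫ y : ℝ, (p j).derivative.eval y * (p k).eval y * Real.exp (-(N * V.eval y)))
          + (∫ y : ℝ, (p k).derivative.eval y * (p j).eval y * Real.exp (-(N * V.eval y)))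
          - N * ∫ y : ℝ, (V.derivative.eval y * (p j).eval y) * (p k).eval y
              * Real.exp (-(N * V.eval y)) := by
      have hF : Integrable (fun y : ℝ =>
          (p j).derivative.eval y * (p k).eval y * Real.exp (-(N * V.eval y))) := by
        refine (hInt ((p j).derivative * p k)).congr
          (Filter.Eventually.of_forall fun y => ?_)
        simp only [Polynomial.eval_mul]
      have hG : Integrable (fun y : ℝ =>
          (p k).derivative.eval y * (p j).eval y * Real.exp (-(N * V.eval y))) := by
        refine (hInt ((p k).derivative * p j)).congr
          (Filter.Eventually.of_forall fun y => ?_)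
        simp only [Polynomial.eval_mul]
      have hH : Integrable (fun y : ℝ =>
          (V.derivative.eval y * (p j).eval y) * (p k).eval y * Real.exp (-(N * V.eval y))) := by
        refine (hInt (V.derivative * p j * p k)).congr
          (Filter.Eventually.of_forall fun y => ?_)
        simp only [Polynomial.eval_mul]
      have hcong : ∀ y : ℝ, ((p j * p k).derivative.eval y
            - R₀.derivative.eval y * (p j * p k).eval y) * Real.exp (-R₀.eval y)
          = (p j).derivative.eval y * (p k).eval y * Real.exp (-(N * V.eval y))
            + (p k).derivative.eval y * (p j).eval y * Real.exp (-(N * V.eval y))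
            - N * ((V.derivative.eval y * (p j).eval y) * (p k).eval y
              * Real.exp (-(N * V.eval y))) := by
        intro y
        rw [hR₀eval, hR₀deriv, Polynomial.derivative_mul]
        simp only [Polynomial.eval_add, Polynomial.eval_mul]
        ring
      rw [MeasureTheory.integral_congr_ae (Filter.Eventually.of_forall hcong)]
      have hFG : Integrable (fun y : ℝ =>
          (p j).derivative.eval y * (p k).eval y * Real.exp (-(N * V.eval y))
          + (p k).derivative.eval y * (p j).eval y * Real.exp (-(N * V.eval y))) := hF.add hG
      have hNH : Integrable (fun y : ℝ =>
          N * ((V.derivative.eval y * (p j).eval y) * (p k).eval y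
            * Real.exp (-(N * V.eval y)))) := hH.const_mul N
      rw [MeasureTheory.integral_sub hFG hNH,
        MeasureTheory.integral_add hF hG, MeasureTheory.integral_const_mul]
    -- the middle term vanishes
    have hmid : ∫ y : ℝ, (p k).derivative.eval y * (p j).eval y * Real.exp (-(N * V.eval y))
        = 0 := by
      refine integral_orthogonal_of_degree_lt p (fun y => N * V.eval y) hInt horth
        (p k).derivative j hdeg hlead ?_
      exact lt_trans (hderivlt k) (by exact_mod_cast hk)
    -- the third term gives polyOfJac
    have hthird : ∫ y : ℝ, (V.derivative.eval y * (p j).eval y) * (p k).eval y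
          * Real.exp (-(N * V.eval y))
        = polyOfJac V.derivative a b j k := by
      have hcong : ∀ y : ℝ, (V.derivative.eval y * (p j).eval y) * (p k).eval y
            * Real.exp (-(N * V.eval y))
          = (∑ l ∈ Finset.range (j + V.derivative.natDegree + 1),
              polyOfJac V.derivative a b j l * (p l).eval y) * (p k).eval y
              * Real.exp (-(N * V.eval y)) := by
        intro y
        rw [polyMul_sum p a b hrec V.derivative j y]
      rw [MeasureTheory.integral_congr_ae (Filter.Eventually.of_forall hcong)]
      have := integral_sum_mul p (fun y => N * V.eval y) hInt horth
        (fun l => polyOfJac V.derivative a b j l) (j + V.derivative.natDegree + 1) k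
      rw [if_pos (by omega)] at this
      exact this
    rw [hparts, hmid, hthird] at hsplit
    rw [h1] at hsplit
    linarith
  intro y
  rw [hlam y]
  refine Finset.sum_congr rfl fun k hk => ?_
  rw [Finset.mem_range] at hk
  rw [key k hk]

end string
lemma sum_ite_sub (M j : ℕ) (h : j ≤ M) (g : ℕ → ℝ) :
    ∑ k ∈ Finset.range M, (if k < j then 0 else g k)
      = (∑ k ∈ Finset.range M, g k) - ∑ k ∈ Finset.range j, g k := by
  have h1 : ∑ k ∈ Finset.range j, g k
      = ∑ k ∈ Finset.range M, (if k < j then g k else 0) := by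
    rw [← Finset.sum_subset (Finset.range_subset_range.2 h)
      (fun k _ hk => by rw [if_neg (by simpa [Finset.mem_range] using hk)])]
    exact Finset.sum_congr rfl fun k hk => (if_pos (Finset.mem_range.1 hk)).symm
  have h2 : ∀ k ∈ Finset.range M, g k = (if k < j then g k else 0) + (if k < j then 0 else g k) :=
    fun k _ => by split_ifs <;> ring
  rw [Finset.sum_congr rfl h2, Finset.sum_add_distrib, h1]
  ring

/-- **Lemma (recurrence for the non-stationary model).**
Let `V` be a real polynomial of even degree with positive leading coefficient, `p_j` the
orthonormal polynomials w.r.t. `e^{-nV(x)}dx` with Jacobi matrix `𝒥` (recurrence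
coefficients `a_k, b_k`), and for `t > 0` let
`φ_j^t(x) = (2π(1-e^{-2t}))^{-1/2} ∫ p_{j-1}(y) e^{-n[V(y) + (e^{-2t}(x²+y²) - 2e^{-t}xy)/(2(1-e^{-2t}))]} dy`,
`φ_j^0 = p_{j-1}`.  Then `x φ_j^t(x) = Σ_k (𝕁^t)_{j,k} φ_k^t(x)` where
`(𝕁^t)_{j,k} = e^{-t} 𝒥_{j,k}` for `j > k` and
`(𝕁^t)_{j,k} = e^{-t} 𝒥_{j,k} + 2 sinh(t) (V'(𝒥))_{j,k}` for `j ≤ k`.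
(Everything is written 0-based: `φ_{j+1} ↦ Φ j`, `p_{j-1} ↦ p (j-1)`, and the sum over
`k` is the finite sum over the band of `𝕁^t`.) -/
theorem nonstationary_recurrence
    (V : Polynomial ℝ) (hVdeg : Even V.natDegree) (hVlead : 0 < V.leadingCoeff)
    (n : ℕ) (hn : 1 ≤ n)
    -- the orthonormal polynomials for `e^{-nV(x)} dx`
    (p : ℕ → Polynomial ℝ)
    (hdeg : ∀ j, (p j).natDegree = j)
    (hlead : ∀ j, 0 < (p j).leadingCoeff)
    (horth : ∀ j k, (∫ x : ℝ, (p j).eval x * (p k).eval x * Real.exp (-(n : ℝ) * V.eval x))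
      = if j = k then 1 else 0)
    -- the three-term recurrence defining the Jacobi matrix `𝒥`
    (a b : ℕ → ℝ)
    (hrec : ∀ j (x : ℝ), x * (p j).eval x =
      a (j + 1) * (p (j + 1)).eval x + b j * (p j).eval x +
        (if j = 0 then 0 else a j * (p (j - 1)).eval x))
    -- the functions `φ_j^t`
    (Φ : ℝ → ℕ → ℝ → ℝ)
    (hΦpos : ∀ t : ℝ, 0 < t → ∀ j (x : ℝ), Φ t j x =
      (Real.sqrt (2 * Real.pi * (1 - Real.exp (-2 * t))))⁻¹ *
        ∫ y : ℝ, (p j).eval y *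
          Real.exp (-(n : ℝ) * (V.eval y +
            (Real.exp (-2 * t) * (x ^ 2 + y ^ 2) - 2 * Real.exp (-t) * x * y) /
              (2 * (1 - Real.exp (-2 * t))))))
    (hΦ0 : ∀ j x, Φ 0 j x = (p j).eval x) :
    ∀ t : ℝ, 0 ≤ t → ∀ j (x : ℝ),
      x * Φ t j x =
        ∑ k ∈ Finset.range (j + V.natDegree + 2),
          (if k < j then Real.exp (-t) * jacEntry a b j k
           else Real.exp (-t) * jacEntry a b j k +
             2 * Real.sinh t * polyOfJac V.derivative a b j k) * Φ t k x := by
  have hN : (0 : ℝ) < (n : ℝ) := by exact_mod_cast hn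
  -- the degree of V is at least 2
  have h2 : 2 ≤ V.natDegree := by
    by_contra hlt
    push_neg at hlt
    have h0 : V.natDegree = 0 := by
      rcases hVdeg with ⟨m, hm⟩; omega
    have hv := Polynomial.eq_C_of_natDegree_eq_zero h0
    have hw := Polynomial.eq_C_of_natDegree_eq_zero (hdeg 0)
    have hone := horth 0 0
    rw [if_pos rfl] at hone
    have hconst : (fun y : ℝ => (p 0).eval y * (p 0).eval y * Real.exp (-(n : ℝ) * V.eval y))
        = fun _ : ℝ => (p 0).coeff 0 * (p 0).coeff 0 * Real.exp (-(n : ℝ) * V.coeff 0) := by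
      funext y
      conv_lhs => rw [hw, hv]
      simp
    rw [hconst, MeasureTheory.integral_const] at hone
    simp [Measure.real, Real.volume_univ] at hone
  -- integrability of polynomials against the base weight
  obtain ⟨c0, hc0, C0, hC0⟩ := quad_lower_bound V hVdeg h2 hVlead (n : ℝ) 0 0 0 hN le_rfl
  have hInt : ∀ q : Polynomial ℝ,
      Integrable (fun y => q.eval y * Real.exp (-((n : ℝ) * V.eval y))) := by
    intro q
    refine integrable_poly_mul_exp q (continuous_const.mul V.continuous) C0 hc0 fun y => ?_
    have := hC0 y; linarith
  have horthN : ∀ j k, (∫ x : ℝ, (p j).eval x * (p k).eval x * Real.exp (-((n : ℝ) * V.eval x)))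
      = if j = k then 1 else 0 := by
    intro j k
    rw [← horth j k]
    exact MeasureTheory.integral_congr_ae (Filter.Eventually.of_forall fun y => by
      simp only [neg_mul])
  have hdexp := deriv_expansion V (n : ℝ) p a b hVdeg h2 hVlead hN hdeg hlead hInt horthN hrec
  have hD'le : V.derivative.natDegree ≤ V.natDegree - 1 := Polynomial.natDegree_derivative_le V
  intro t ht j x
  rcases eq_or_lt_of_le ht with ht0 | htpos
  · -- the case t = 0
    subst ht0
    simp only [hΦ0]
    have hsimp : ∀ k ∈ Finset.range (j + V.natDegree + 2),
        (if k < j then Real.exp (-0) * jacEntry a b j k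
         else Real.exp (-0) * jacEntry a b j k
           + 2 * Real.sinh 0 * polyOfJac V.derivative a b j k) * (p k).eval x
        = jacEntry a b j k * (p k).eval x := by
      intro k _
      rw [neg_zero, Real.exp_zero, Real.sinh_zero]
      split_ifs <;> ring
    rw [Finset.sum_congr rfl hsimp, rec_sum p a b hrec j x]
    refine Finset.sum_subset (Finset.range_subset_range.2 (by omega)) fun k hk hkn => ?_
    rw [Finset.mem_range] at hk
    rw [Finset.mem_range] at hkn
    rw [jacEntry_eq_zero (by omega), zero_mul]
  · -- the case t > 0
    have hcc2 : Real.exp (-2 * t) = Real.exp (-t) ^ 2 := by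
      rw [show (-2 * t) = (-t) + (-t) by ring, Real.exp_add]; ring
    obtain ⟨cc, hcc⟩ : ∃ cc : ℝ, cc = Real.exp (-t) := ⟨_, rfl⟩
    obtain ⟨ss, hss⟩ : ∃ ss : ℝ, ss = 1 - Real.exp (-2 * t) := ⟨_, rfl⟩
    have hccpos : 0 < cc := hcc ▸ Real.exp_pos _
    have hsspos : 0 < ss := by
      rw [hss]
      have : Real.exp (-2 * t) < 1 := Real.exp_lt_one_iff.2 (by linarith)
      linarith
    have hss2 : ss = 1 - cc ^ 2 := by rw [hss, hcc2, hcc]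
    have hsinh : ss / cc = 2 * Real.sinh t := by
      rw [Real.sinh_eq, div_eq_iff hccpos.ne', hss, hcc]
      have e1 : Real.exp t * Real.exp (-t) = 1 := by rw [← Real.exp_add]; simp
      have e2 : Real.exp (-t) * Real.exp (-t) = Real.exp (-2 * t) := by
        rw [← Real.exp_add]; ring_nf
      linear_combination (-1 : ℝ) * e1 + e2
    -- the exponent polynomial
    set R : Polynomial ℝ := Polynomial.C (n : ℝ) * V
        + Polynomial.C ((n : ℝ) * cc ^ 2 / (2 * ss)) * Polynomial.X ^ 2
        + Polynomial.C (-((n : ℝ) * cc * x / ss)) * Polynomial.X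
        + Polynomial.C ((n : ℝ) * cc ^ 2 * x ^ 2 / (2 * ss)) with hR
    have hReval : ∀ y : ℝ, R.eval y = (n : ℝ) * V.eval y
        + (((n : ℝ) * cc ^ 2 / (2 * ss)) * y ^ 2 + (-((n : ℝ) * cc * x / ss)) * y
          + (n : ℝ) * cc ^ 2 * x ^ 2 / (2 * ss)) := by
      intro y; simp [hR]; ring
    obtain ⟨c1, hc1, C1, hC1⟩ := quad_lower_bound V hVdeg h2 hVlead (n : ℝ)
      ((n : ℝ) * cc ^ 2 / (2 * ss)) (-((n : ℝ) * cc * x / ss))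
      ((n : ℝ) * cc ^ 2 * x ^ 2 / (2 * ss)) hN (by positivity)
    have hRbound : ∀ y : ℝ, c1 * y ^ 2 - C1 ≤ R.eval y := fun y => by
      rw [hReval y]; exact hC1 y
    have hIntR : ∀ q : Polynomial ℝ, Integrable (fun y => q.eval y * Real.exp (-R.eval y)) :=
      fun q => integrable_poly_mul_exp q R.continuous C1 hc1 hRbound
    have hRd : ∀ y : ℝ, R.derivative.eval y = (n : ℝ) * V.derivative.eval y
        + (n : ℝ) * cc ^ 2 / ss * y - (n : ℝ) * cc * x / ss := by
      intro y; simp [hR]; ring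
    -- Φ in terms of the integrals against exp(-R)
    set Z : ℝ := (Real.sqrt (2 * Real.pi * (1 - Real.exp (-2 * t))))⁻¹ with hZ
    have hΦI : ∀ k, Φ t k x = Z * ∫ y : ℝ, (p k).eval y * Real.exp (-R.eval y) := by
      intro k
      rw [hΦpos t htpos k x, ← hZ]
      congr 1
      refine MeasureTheory.integral_congr_ae (Filter.Eventually.of_forall fun y => ?_)
      have harg : -(n : ℝ) * (V.eval y + (Real.exp (-2 * t) * (x ^ 2 + y ^ 2)
            - 2 * Real.exp (-t) * x * y) / (2 * (1 - Real.exp (-2 * t))))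
          = -R.eval y := by
        rw [hReval y, hcc, hss, hcc2]
        have hne : (1 : ℝ) - Real.exp (-t) ^ 2 ≠ 0 := by
          rw [← hcc2, ← hss]; exact hsspos.ne'
        field_simp
        ring
      beta_reduce
      rw [harg]
    -- the pointwise differential identity
    have hq1 : ∀ y : ℝ, x * ((p j).eval y * Real.exp (-R.eval y))
        = cc * ((Polynomial.X * p j).eval y * Real.exp (-R.eval y))
          + (ss / cc) * (((V.derivative * p j
              - Polynomial.C (1 / (n : ℝ)) * (p j).derivative).eval y) * Real.exp (-R.eval y))
          + (ss / ((n : ℝ) * cc)) * (((p j).derivative.eval y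
              - R.derivative.eval y * (p j).eval y) * Real.exp (-R.eval y)) := by
      intro y
      rw [hRd y]
      simp only [Polynomial.eval_mul, Polynomial.eval_sub, Polynomial.eval_X, Polynomial.eval_C]
      field_simp
      ring
    have ht3 : Integrable (fun y : ℝ =>
        ((p j).derivative.eval y - R.derivative.eval y * (p j).eval y) * Real.exp (-R.eval y)) := by
      refine (hIntR ((p j).derivative - R.derivative * p j)).congr
        (Filter.Eventually.of_forall fun y => ?_)
      simp only [Polynomial.eval_sub, Polynomial.eval_mul]
    have hzero3 : ∫ y : ℝ, ((p j).derivative.eval y - R.derivative.eval y * (p j).eval y)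
        * Real.exp (-R.eval y) = 0 := integral_deriv_poly_exp R (p j) C1 hc1 hRbound
    have hIxj : x * (∫ y : ℝ, (p j).eval y * Real.exp (-R.eval y))
        = cc * (∫ y : ℝ, (Polynomial.X * p j).eval y * Real.exp (-R.eval y))
          + (ss / cc) * (∫ y : ℝ, (V.derivative * p j
              - Polynomial.C (1 / (n : ℝ)) * (p j).derivative).eval y * Real.exp (-R.eval y)) := by
      rw [← MeasureTheory.integral_const_mul,
        MeasureTheory.integral_congr_ae (Filter.Eventually.of_forall hq1)]
      have i1 : Integrable (fun y : ℝ =>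
          cc * ((Polynomial.X * p j).eval y * Real.exp (-R.eval y))) := (hIntR _).const_mul _
      have i2 : Integrable (fun y : ℝ => (ss / cc) * (((V.derivative * p j
          - Polynomial.C (1 / (n : ℝ)) * (p j).derivative).eval y) * Real.exp (-R.eval y))) :=
        (hIntR _).const_mul _
      have i3 : Integrable (fun y : ℝ => (ss / ((n : ℝ) * cc)) * (((p j).derivative.eval y
          - R.derivative.eval y * (p j).eval y) * Real.exp (-R.eval y))) := ht3.const_mul _
      have i12 : Integrable (fun y : ℝ =>
          cc * ((Polynomial.X * p j).eval y * Real.exp (-R.eval y))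
          + (ss / cc) * (((V.derivative * p j
            - Polynomial.C (1 / (n : ℝ)) * (p j).derivative).eval y) * Real.exp (-R.eval y))) :=
        i1.add i2
      rw [MeasureTheory.integral_add i12 i3, MeasureTheory.integral_add i1 i2,
        MeasureTheory.integral_const_mul, MeasureTheory.integral_const_mul,
        MeasureTheory.integral_const_mul, hzero3, mul_zero, add_zero]
    have hsum1 : (∫ y : ℝ, (Polynomial.X * p j).eval y * Real.exp (-R.eval y))
        = ∑ k ∈ Finset.range (j + 2), jacEntry a b j k
            * ∫ y : ℝ, (p k).eval y * Real.exp (-R.eval y) := by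
      have hcong : ∀ y : ℝ, (Polynomial.X * p j).eval y * Real.exp (-R.eval y)
          = ∑ k ∈ Finset.range (j + 2), jacEntry a b j k
              * ((p k).eval y * Real.exp (-R.eval y)) := by
        intro y
        rw [Polynomial.eval_mul, Polynomial.eval_X, rec_sum p a b hrec j y, Finset.sum_mul]
        exact Finset.sum_congr rfl fun k _ => by ring
      rw [MeasureTheory.integral_congr_ae (Filter.Eventually.of_forall hcong),
        MeasureTheory.integral_finset_sum _ (fun k _ => (hIntR (p k)).const_mul _)]
      exact Finset.sum_congr rfl fun k _ => MeasureTheory.integral_const_mul _ _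
    have hq2eval : ∀ y : ℝ, (V.derivative * p j
          - Polynomial.C (1 / (n : ℝ)) * (p j).derivative).eval y
        = ∑ k ∈ Finset.range (j + V.derivative.natDegree + 1),
            (if k < j then 0 else polyOfJac V.derivative a b j k) * (p k).eval y := by
      intro y
      have e1 : (V.derivative * p j - Polynomial.C (1 / (n : ℝ)) * (p j).derivative).eval y
          = V.derivative.eval y * (p j).eval y - (1 / (n : ℝ)) * (p j).derivative.eval y := by
        simp
      rw [e1, polyMul_sum p a b hrec V.derivative j y, hdexp j y, Finset.mul_sum]
      have e2 : ∀ k ∈ Finset.range j, (1 / (n : ℝ))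
            * (((n : ℝ) * polyOfJac V.derivative a b j k) * (p k).eval y)
          = polyOfJac V.derivative a b j k * (p k).eval y := by
        intro k _; field_simp
      rw [Finset.sum_congr rfl e2]
      have e3 : ∀ k ∈ Finset.range (j + V.derivative.natDegree + 1),
          (if k < j then 0 else polyOfJac V.derivative a b j k) * (p k).eval y
          = (if k < j then 0 else polyOfJac V.derivative a b j k * (p k).eval y) := by
        intro k _; split_ifs <;> ring
      rw [Finset.sum_congr rfl e3, sum_ite_sub _ j (by omega) _]
    have hsum2 : (∫ y : ℝ, (V.derivative * p j
          - Polynomial.C (1 / (n : ℝ)) * (p j).derivative).eval y * Real.exp (-R.eval y))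
        = ∑ k ∈ Finset.range (j + V.derivative.natDegree + 1),
            (if k < j then 0 else polyOfJac V.derivative a b j k)
              * ∫ y : ℝ, (p k).eval y * Real.exp (-R.eval y) := by
      have hcong : ∀ y : ℝ, (V.derivative * p j
            - Polynomial.C (1 / (n : ℝ)) * (p j).derivative).eval y * Real.exp (-R.eval y)
          = ∑ k ∈ Finset.range (j + V.derivative.natDegree + 1),
              (if k < j then 0 else polyOfJac V.derivative a b j k)
                * ((p k).eval y * Real.exp (-R.eval y)) := by
        intro y
        rw [hq2eval y, Finset.sum_mul]
        exact Finset.sum_congr rfl fun k _ => by ring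
      rw [MeasureTheory.integral_congr_ae (Filter.Eventually.of_forall hcong),
        MeasureTheory.integral_finset_sum _ (fun k _ => (hIntR (p k)).const_mul _)]
      exact Finset.sum_congr rfl fun k _ => MeasureTheory.integral_const_mul _ _
    -- final assembly
    rw [hΦI j]
    have hGoalR : ∀ k ∈ Finset.range (j + V.natDegree + 2),
        (if k < j then Real.exp (-t) * jacEntry a b j k
         else Real.exp (-t) * jacEntry a b j k
           + 2 * Real.sinh t * polyOfJac V.derivative a b j k) * Φ t k x
        = Z * (cc * (jacEntry a b j k * ∫ y : ℝ, (p k).eval y * Real.exp (-R.eval y))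
            + (ss / cc) * ((if k < j then 0 else polyOfJac V.derivative a b j k)
              * ∫ y : ℝ, (p k).eval y * Real.exp (-R.eval y))) := by
      intro k _
      rw [hΦI k, ← hcc, ← hsinh]
      split_ifs <;> ring
    rw [Finset.sum_congr rfl hGoalR, ← Finset.mul_sum]
    have hsplitsum : ∑ k ∈ Finset.range (j + V.natDegree + 2),
          (cc * (jacEntry a b j k * ∫ y : ℝ, (p k).eval y * Real.exp (-R.eval y))
            + (ss / cc) * ((if k < j then 0 else polyOfJac V.derivative a b j k)
              * ∫ y : ℝ, (p k).eval y * Real.exp (-R.eval y)))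
        = cc * (∑ k ∈ Finset.range (j + 2), jacEntry a b j k
              * ∫ y : ℝ, (p k).eval y * Real.exp (-R.eval y))
          + (ss / cc) * (∑ k ∈ Finset.range (j + V.derivative.natDegree + 1),
              (if k < j then 0 else polyOfJac V.derivative a b j k)
                * ∫ y : ℝ, (p k).eval y * Real.exp (-R.eval y)) := by
      rw [Finset.sum_add_distrib, ← Finset.mul_sum, ← Finset.mul_sum]
      congr 1
      · congr 1
        refine (Finset.sum_subset (Finset.range_subset_range.2 (by omega)) fun k hk hkn => ?_).symm
        rw [Finset.mem_range] at hk hkn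
        rw [jacEntry_eq_zero (by omega), zero_mul]
      · congr 1
        refine (Finset.sum_subset (Finset.range_subset_range.2 (by omega)) fun k hk hkn => ?_).symm
        rw [Finset.mem_range] at hk hkn
        rw [if_neg (by omega), polyOfJac_band a b V.derivative j k (by omega), zero_mul]
    rw [hsplitsum, ← hsum1, ← hsum2, ← hIxj]
    ring

end
end
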